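/- arXiv:math/0605579 — 3 statements merged into one kernel-verified Lean document; each statement's English description precedes it below -/
import Mathlib

section
/- Let n ≥ 1, p ≥ 2 and let w be any positive braid word on p strands. Then the explicitly described beginning of the sl(n) Khovanov–Rozansky chain complex of the closure of w is exact at homological degree 1: ker d¹ = im d⁰. (This is the paper's Theorem 19: the first sl(n) homology group of any positive braid knot is trivial for every positive integer n, expressed via the explicit Khovanov–Rozansky cube of a positive braid closure.) -/
/-!
Statement 1 (Theorem 19): for `n ≥ 1`, `p ≥ 2` and any positive braid word `w` on `p`
strands, the explicitly described beginning `C⁰ → C¹ → C²` of the `sl(n)`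
Khovanov–Rozansky chain complex of the closure of `w` is exact at homological degree 1:
`ker d¹ = im d⁰`.

Encoding: `p = p0 + 2` (covering all `p ≥ 2`) and the braid word is a list `w` of
letters in `Fin (p0+1)` (letter `a` = crossing between strands `a` and `a+1`, 0-based).
We realise all the tensor products of the algebras `A_i, B_i, C_i, F_{i,j}` as explicit
quotients of the single polynomial ring `R = ℚ[x_0, …, x_{p−1}, y]`
(`= MvPolynomial (Option (Fin (p0+2))) ℚ`, the variable `none` being `y`): e.g.
`A_1 ⊗ ⋯ ⊗ A_p = R/(y, x_0^n, …, x_{p−1}^n)` and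
`A_1 ⊗ ⋯ ⊗ B_a ⊗ ⋯ ⊗ A_p = R/(y, x_0^n, …, x_{p−1}^n, π^n_{a,a+1}, π^{n−1}_{a,a+1})`
(the generators `x_a^n`, `x_{a+1}^n` being redundant since
`x_a^n = π^n_{a,a+1} − x_{a+1} π^{n−1}_{a,a+1}`, these are exactly the stated algebras).
The differentials are the (signed) natural quotient maps, except for the same-letter
components of `d¹`, which are induced by `f ↦ (y − x_{a+1}) · f|_{y:=0}`, i.e. the
natural map `B_a → C_a` followed by multiplication by `(y − x_{a+1})`, the component out
of the larger crossing of a pair carrying a minus sign.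
-/

namespace KRPositiveBraid

open MvPolynomial

variable (p0 n : ℕ)

/-- The ambient polynomial ring `R = ℚ[x_0, …, x_{p−1}, y]`. -/
abbrev R := MvPolynomial (Option (Fin (p0 + 2))) ℚ

/-- `π^k_{i,j} = Σ_{l=0}^k x_i^l x_j^{k−l}`. -/
noncomputable def pin (k : ℕ) (i j : Fin (p0 + 2)) : R p0 :=
  ∑ l ∈ Finset.range (k + 1), X (some i) ^ l * X (some j) ^ (k - l)

/-- The generators `x_k^n` (killing each strand variable to the `n`-th power). -/
def baseGens : Set (R p0) := Set.range (fun k : Fin (p0 + 2) => X (some k) ^ n)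

/-- The pair of generators `π^n_{a,a+1}`, `π^{n−1}_{a,a+1}` of the wide-edge algebra
`B_a` at the letter `a`. -/
noncomputable def piGens (a : Fin (p0 + 1)) : Set (R p0) :=
  {pin p0 n a.castSucc a.succ, pin p0 (n - 1) a.castSucc a.succ}

/-- Generators of the ideal presenting `C⁰ = A_1 ⊗ ⋯ ⊗ A_p`. -/
def gens0 : Set (R p0) := baseGens p0 n ∪ {X none}

/-- Generators of the ideal presenting `V̄_c = A_1 ⊗ ⋯ ⊗ B_a ⊗ ⋯ ⊗ A_p`. -/
noncomputable def gensC (a : Fin (p0 + 1)) : Set (R p0) :=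
  gens0 p0 n ∪ piGens p0 n a

/-- Generators of the ideal presenting `A_1 ⊗ ⋯ ⊗ C_a ⊗ ⋯ ⊗ A_p` (the same-letter
double resolution; here `y` survives as the extra variable of `C_a`). -/
noncomputable def gensSame (a : Fin (p0 + 1)) : Set (R p0) :=
  (baseGens p0 n ∪ piGens p0 n a) ∪
    {(X none - X (some a.castSucc)) * (X none - X (some a.succ))}

/-- Generators of the ideal presenting the different-letter double resolution
`⋯ ⊗ B_a ⊗ ⋯ ⊗ B_b ⊗ ⋯`. -/
noncomputable def gensDiff (a b : Fin (p0 + 1)) : Set (R p0) :=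
  gensC p0 n a ∪ piGens p0 n b

noncomputable def I0 : Ideal (R p0) := Ideal.span (gens0 p0 n)
noncomputable def Ic (a : Fin (p0 + 1)) : Ideal (R p0) := Ideal.span (gensC p0 n a)
noncomputable def Jsame (a : Fin (p0 + 1)) : Ideal (R p0) :=
  Ideal.span (gensSame p0 n a)
noncomputable def Jdiff (a b : Fin (p0 + 1)) : Ideal (R p0) :=
  Ideal.span (gensDiff p0 n a b)

/-- A quotient of `R` by (the ℚ-submodule underlying) an ideal, as a ℚ-vector space. -/
abbrev QV (I : Ideal (R p0)) := R p0 ⧸ Submodule.restrictScalars ℚ I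

/-- The substitution `y ↦ 0` (and `x_i ↦ x_i`), as a ℚ-algebra endomorphism of `R`. -/
noncomputable def killY : R p0 →ₐ[ℚ] R p0 :=
  aeval (fun v => Option.elim v 0 (fun i => X (some i)))

/-- `f ↦ (y − x_{a+1}) · f|_{y:=0}`: the ambient representative of the natural map
`B_a → C_a` followed by multiplication by `y − x_{a+1}`. -/
noncomputable def sigmaMap (a : Fin (p0 + 1)) : R p0 →ₗ[ℚ] R p0 :=
  (LinearMap.mulLeft ℚ (X none - X (some a.succ))).comp (killY p0).toLinearMap

lemma killY_mem_Jsame (a : Fin (p0 + 1)) :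
    ∀ g ∈ gensC p0 n a, killY p0 g ∈ Jsame p0 n a := by
  rintro g (((⟨k, rfl⟩ | rfl) | (rfl | rfl)))
  · -- `x_k^n`
    refine Ideal.subset_span ?_
    left; left
    refine ⟨k, ?_⟩
    simp [killY, map_pow]
  · -- `y ↦ 0`
    simp only [killY, aeval_X, Option.elim]
    exact (Jsame p0 n a).zero_mem
  · -- `π^n`
    have : killY p0 (pin p0 n a.castSucc a.succ) = pin p0 n a.castSucc a.succ := by
      simp [killY, pin, map_sum, map_mul, map_pow]
    rw [this]
    exact Ideal.subset_span (Or.inl (Or.inr (Or.inl rfl)))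
  · -- `π^{n−1}`
    have : killY p0 (pin p0 (n - 1) a.castSucc a.succ)
        = pin p0 (n - 1) a.castSucc a.succ := by
      simp [killY, pin, map_sum, map_mul, map_pow]
    rw [this]
    exact Ideal.subset_span (Or.inl (Or.inr (Or.inr rfl)))

lemma sigmaMap_maps (a : Fin (p0 + 1)) :
    Submodule.restrictScalars ℚ (Ic p0 n a) ≤
      Submodule.comap (sigmaMap p0 a) (Submodule.restrictScalars ℚ (Jsame p0 n a)) := by
  intro f hf
  simp only [Submodule.restrictScalars_mem] at hf
  simp only [Submodule.mem_comap, Submodule.restrictScalars_mem, sigmaMap,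
    LinearMap.coe_comp, Function.comp_apply, AlgHom.toLinearMap_apply,
    LinearMap.mulLeft_apply]
  have hmem : killY p0 f ∈ Jsame p0 n a := by
    have hmap : Ideal.map (killY p0).toRingHom (Ic p0 n a) ≤ Jsame p0 n a := by
      rw [Ic, Ideal.map_span]
      refine Ideal.span_le.2 ?_
      rintro g ⟨g', hg', rfl⟩
      exact killY_mem_Jsame p0 n a g' hg'
    exact hmap (Ideal.mem_map_of_mem _ hf)
  exact Ideal.mul_mem_left _ _ hmem

variable (w : List (Fin (p0 + 1)))

/-- The letter (0-based) of the crossing `c`. -/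
def letter (c : Fin w.length) : ℕ := (w.get c : ℕ)

/-- The ordering of the crossings: first by letter, then by position in the word. -/
def cLT (c d : Fin w.length) : Prop :=
  letter p0 w c < letter p0 w d ∨ (letter p0 w c = letter p0 w d ∧ c.1 < d.1)

/-- The ordered pairs of distinct crossings with the same letter. -/
def SamePair :=
  {cd : Fin w.length × Fin w.length //
    cLT p0 w cd.1 cd.2 ∧ letter p0 w cd.1 = letter p0 w cd.2}

/-- The ordered pairs of crossings with different letters. -/
def DiffPair :=
  {cd : Fin w.length × Fin w.length //
    cLT p0 w cd.1 cd.2 ∧ letter p0 w cd.1 ≠ letter p0 w cd.2}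

/-- `C⁰ = A_1 ⊗ ⋯ ⊗ A_p`. -/
noncomputable abbrev C0 := QV p0 (I0 p0 n)

/-- `C¹ = ⊕_c V̄_c`. -/
noncomputable abbrev C1 := Π c : Fin w.length, QV p0 (Ic p0 n (w.get c))

/-- `C² = ⊕_{c<d} V̄_{c,d}` (the same-letter part and the different-letter part). -/
noncomputable abbrev C2 :=
  (Π pr : SamePair p0 w, QV p0 (Jsame p0 n (w.get pr.1.1))) ×
  (Π pr : DiffPair p0 w, QV p0 (Jdiff p0 n (w.get pr.1.1) (w.get pr.1.2)))

/-- `d⁰ : C⁰ → C¹`: each component is the natural quotient map. -/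
noncomputable def d0 : C0 p0 n →ₗ[ℚ] C1 p0 n w :=
  LinearMap.pi (fun c =>
    Submodule.mapQ _ _ LinearMap.id (by
      intro x hx
      exact Ideal.span_mono Set.subset_union_left hx))

/-- The same-letter part of `d¹`: for a pair `c < d` of crossings of the same letter
`a`, the component out of `V̄_c` is induced by `f ↦ (y − x_{a+1}) · f|_{y:=0}` (the
natural map `B_a → C_a` followed by multiplication by `y − x_{a+1}`), and the component
out of `V̄_d` is its negative. -/
noncomputable def d1same :
    C1 p0 n w →ₗ[ℚ] Π pr : SamePair p0 w, QV p0 (Jsame p0 n (w.get pr.1.1)) :=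
  LinearMap.pi (fun pr =>
    (Submodule.mapQ _ _ (sigmaMap p0 (w.get pr.1.1))
        (sigmaMap_maps p0 n (w.get pr.1.1))).comp (LinearMap.proj pr.1.1)
    - (Submodule.mapQ _ _ (sigmaMap p0 (w.get pr.1.1)) (by
          have hEq : w.get pr.1.2 = w.get pr.1.1 := Fin.val_injective pr.2.2.symm
          rw [hEq]
          exact sigmaMap_maps p0 n (w.get pr.1.1))).comp (LinearMap.proj pr.1.2))

/-- The different-letter part of `d¹`: natural quotient maps, the component out of the
larger crossing carrying a minus sign. -/
noncomputable def d1diff :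
    C1 p0 n w →ₗ[ℚ]
      Π pr : DiffPair p0 w, QV p0 (Jdiff p0 n (w.get pr.1.1) (w.get pr.1.2)) :=
  LinearMap.pi (fun pr =>
    (Submodule.mapQ _ _ LinearMap.id (by
        intro x hx
        exact Ideal.span_mono Set.subset_union_left hx)).comp (LinearMap.proj pr.1.1)
    - (Submodule.mapQ _ _ LinearMap.id (by
        intro x hx
        refine Ideal.span_mono ?_ hx
        exact Set.union_subset (Set.subset_union_left.trans Set.subset_union_left)
          Set.subset_union_right)).comp (LinearMap.proj pr.1.2))

/-- `d¹ : C¹ → C²`. -/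
noncomputable def d1 : C1 p0 n w →ₗ[ℚ] C2 p0 n w :=
  LinearMap.prod (d1same p0 n w) (d1diff p0 n w)


/-! ### Auxiliary development for the proof -/

section Aux

open Finsupp in
/-- Factoring a power of a variable out of a monomial. -/
lemma monomial_factor (μ : Option (Fin (p0 + 2)) →₀ ℕ) (j : Option (Fin (p0 + 2)))
    (e : ℕ) (h : e ≤ μ j) (c : ℚ) :
    (monomial μ c : R p0) = X j ^ e * monomial (μ - Finsupp.single j e) c := by
  have hμ : Finsupp.single j e + (μ - Finsupp.single j e) = μ := by
    ext k
    by_cases hk : k = j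
    · subst hk
      simp only [Finsupp.add_apply, Finsupp.tsub_apply, Finsupp.single_eq_same]
      omega
    · simp [Finsupp.add_apply, Finsupp.tsub_apply, Finsupp.single_apply, Ne.symm hk]
  rw [X_pow_eq_monomial, monomial_mul, one_mul, hμ]

lemma killY_monomial (μ : Option (Fin (p0 + 2)) →₀ ℕ) (c : ℚ) :
    killY p0 (monomial μ c) = if μ none = 0 then (monomial μ c : R p0) else 0 := by
  rw [killY, aeval_monomial]
  split_ifs with h
  · rw [monomial_eq]
    congr 1
    apply Finsupp.prod_congr
    intro v hv
    cases v with
    | none => exact absurd h (Finsupp.mem_support_iff.1 hv)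
    | some i => rfl
  · have hmem : none ∈ μ.support := Finsupp.mem_support_iff.2 h
    rw [Finsupp.prod, Finset.prod_eq_zero hmem (by simp [zero_pow h]), mul_zero]

lemma sub_killY_mem (f : R p0) :
    f - killY p0 f ∈ Ideal.span {(X none : R p0)} := by
  have h2 : f = ∑ μ ∈ f.support, monomial μ (coeff μ f) := (support_sum_monomial_coeff f).symm
  rw [h2, map_sum, ← Finset.sum_sub_distrib]
  refine Submodule.sum_mem _ (fun μ _ => ?_)
  rw [killY_monomial]
  split_ifs with h
  · simp
  · rw [sub_zero]
    refine Ideal.mem_span_singleton.2 ⟨monomial (μ - Finsupp.single none 1) (coeff μ f), ?_⟩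
    rw [← pow_one (X none : R p0)]
    exact monomial_factor p0 μ none 1 (by omega) _

/-- Substitution forgetting the variable `y`. -/
noncomputable def down : R p0 →ₐ[ℚ] MvPolynomial (Fin (p0 + 2)) ℚ :=
  aeval (fun v => Option.elim v 0 (fun i => X i))

lemma killY_eq (f : R p0) : rename some (down p0 f) = killY p0 f := by
  have h : (rename (R := ℚ) some).comp (down p0) = killY p0 := by
    apply algHom_ext
    rintro (_ | i) <;> simp [down, killY]
  exact DFunLike.congr_fun h f

lemma killY_fix (a : Fin (p0 + 1)) (g : R p0)
    (hg : g ∈ baseGens p0 n ∪ piGens p0 n a) : killY p0 g = g := by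
  rcases hg with ⟨k, rfl⟩ | hg
  · simp [killY, map_pow]
  · rcases hg with rfl | rfl <;> simp [killY, pin, map_sum, map_mul, map_pow]

/-- Part A: if `(y − x_{a+1})·f|_{y:=0} ∈ Jsame a` then `f ∈ Ic a`. -/
lemma mem_Ic_of_sigma_mem (a : Fin (p0 + 1)) (f : R p0)
    (h : sigmaMap p0 a f ∈ Jsame p0 n a) : f ∈ Ic p0 n a := by
  classical
  set S := MvPolynomial (Fin (p0 + 2)) ℚ with hS
  set G : Set (R p0) := baseGens p0 n ∪ piGens p0 n a with hG
  set I₁ : Ideal S := Ideal.span (down p0 '' G) with hI₁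
  set mk : S →ₐ[ℚ] S ⧸ I₁ := Ideal.Quotient.mkₐ ℚ I₁ with hmk
  set Θ : R p0 →ₐ[ℚ] Polynomial (S ⧸ I₁) :=
    (Polynomial.mapAlgHom mk).comp (optionEquivLeft ℚ (Fin (p0 + 2))).toAlgHom with hΘ
  have hΘnone : Θ (X none) = Polynomial.X := by
    simp [hΘ, optionEquivLeft_X_none]
  have hΘsome : ∀ i, Θ (X (some i)) = Polynomial.C (mk (X i)) := by
    intro i
    simp [hΘ, optionEquivLeft_X_some]
  have hΘrename : ∀ q : S, Θ (rename some q) = Polynomial.C (mk q) := by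
    have hcomp : Θ.comp (rename (R := ℚ) some)
        = (Polynomial.CAlgHom (R := ℚ)).comp mk := by
      apply algHom_ext
      intro i
      simp [hΘsome, Polynomial.CAlgHom]
    intro q
    simpa [Polynomial.CAlgHom] using DFunLike.congr_fun hcomp q
  have hG0 : ∀ g ∈ G, Θ g = 0 := by
    intro g hg
    have hfix : rename some (down p0 g) = g := (killY_eq p0 _).trans (killY_fix p0 n a g hg)
    have h1 : Θ g = Polynomial.C (mk (down p0 g)) := by
      conv_lhs => rw [← hfix]
      rw [hΘrename]
    have h2 : down p0 g ∈ I₁ := Ideal.subset_span ⟨g, hg, rfl⟩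
    rw [h1]
    simp [hmk, Ideal.Quotient.mkₐ_eq_mk, Ideal.Quotient.eq_zero_iff_mem.2 h2]
  set u : S ⧸ I₁ := mk (X a.castSucc) with hu
  set v : S ⧸ I₁ := mk (X a.succ) with hv
  have hm : Ideal.map (rename (R := ℚ) some) I₁ ≤ Ic p0 n a := by
    rw [hI₁, Ideal.map_span, Ideal.span_le]
    rintro _ ⟨_, ⟨g, hg, rfl⟩, rfl⟩
    rw [killY_eq, killY_fix p0 n a g hg]
    refine Ideal.subset_span ?_
    rcases hg with hg | hg
    · exact Or.inl (Or.inl hg)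
    · exact Or.inr hg
  by_cases htriv : I₁ = ⊤
  · have h1 : (1 : R p0) ∈ Ic p0 n a := by
      have : (1 : MvPolynomial (Fin (p0 + 2)) ℚ) ∈ I₁ := htriv ▸ trivial
      simpa using hm (Ideal.mem_map_of_mem (rename (R := ℚ) some) this)
    exact (Ideal.eq_top_iff_one _).2 h1 ▸ trivial
  haveI : Nontrivial (S ⧸ I₁) := Ideal.Quotient.nontrivial_iff.mpr htriv
  set q : Polynomial (S ⧸ I₁) :=
    (Polynomial.X - Polynomial.C u) * (Polynomial.X - Polynomial.C v) with hqdef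
  have hq : q.Monic := (Polynomial.monic_X_sub_C u).mul (Polynomial.monic_X_sub_C v)
  have hqd : q.natDegree = 2 := by
    rw [hqdef, (Polynomial.monic_X_sub_C u).natDegree_mul (Polynomial.monic_X_sub_C v),
      Polynomial.natDegree_X_sub_C, Polynomial.natDegree_X_sub_C]
  have hmap : ∀ x ∈ Jsame p0 n a, Θ x ∈ Ideal.span {q} := by
    intro x hx
    have h1 : Ideal.map Θ (Jsame p0 n a) ≤ Ideal.span {q} := by
      rw [Jsame, gensSame, Ideal.map_span, Ideal.span_le]
      rintro _ ⟨g, hg, rfl⟩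
      rcases hg with hg | hg
      · rw [hG0 g hg]
        exact zero_mem _
      · rcases hg with rfl
        have : Θ ((X none - X (some a.castSucc)) * (X none - X (some a.succ))) = q := by
          rw [map_mul, map_sub, map_sub, hΘnone, hΘsome, hΘsome]
        rw [this]
        exact Ideal.subset_span rfl
    exact h1 (Ideal.mem_map_of_mem _ hx)
  have hσ : Θ (sigmaMap p0 a f)
      = (Polynomial.X - Polynomial.C v) * Polynomial.C (mk (down p0 f)) := by
    have h1 : sigmaMap p0 a f = (X none - X (some a.succ)) * killY p0 f := rfl
    rw [h1, ← killY_eq, map_mul, map_sub, hΘnone, hΘsome, hΘrename]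
  have hmem := hmap _ h
  rw [hσ] at hmem
  obtain ⟨ww, hw⟩ := Ideal.mem_span_singleton'.1 hmem
  replace hw := hw.symm.trans (mul_comm ww q)
  have hz : mk (down p0 f) = 0 := by
    by_cases hww : ww = 0
    · rw [hww, mul_zero] at hw
      have hc := congrArg (fun P => Polynomial.coeff P 1) hw
      simpa [sub_mul, Polynomial.coeff_X_mul, Polynomial.coeff_C] using hc
    · exfalso
      have hlhs : ((Polynomial.X - Polynomial.C v) * Polynomial.C (mk (down p0 f))).natDegree ≤ 1 := by
        refine le_trans (Polynomial.natDegree_mul_le) ?_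
        simp [Polynomial.natDegree_X_sub_C]
      have h1 : ((Polynomial.X - Polynomial.C v) * Polynomial.C (mk (down p0 f))).coeff
          (2 + ww.natDegree) = 0 :=
        Polynomial.coeff_eq_zero_of_natDegree_lt (by omega)
      have h2 : (q * ww).coeff (2 + ww.natDegree) = ww.leadingCoeff := by
        have := Polynomial.coeff_mul_degree_add_degree q ww
        rw [hqd] at this
        rw [this, hq.leadingCoeff, one_mul]
      rw [hw, h2] at h1
      exact hww (Polynomial.leadingCoeff_eq_zero.1 h1)
  have hdf : down p0 f ∈ I₁ := by
    have := hz
    rwa [hmk, Ideal.Quotient.mkₐ_eq_mk, Ideal.Quotient.eq_zero_iff_mem] at this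
  have h2 : killY p0 f ∈ Ic p0 n a := by
    rw [← killY_eq]
    exact hm (Ideal.mem_map_of_mem _ hdf)
  have h3 : f - killY p0 f ∈ Ic p0 n a := by
    refine Ideal.span_mono ?_ (sub_killY_mem p0 f)
    intro x hx
    rcases hx with rfl
    exact Or.inl (Or.inr rfl)
  simpa using add_mem h3 h2

end Aux

section PartB

/-- "Bad" exponent vectors: those whose monomials lie in `I0`. -/
def BadM (μ : Option (Fin (p0 + 2)) →₀ ℕ) : Prop :=
  μ none ≠ 0 ∨ ∃ k : Fin (p0 + 2), n ≤ μ (some k)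

instance badM_dec (μ : Option (Fin (p0 + 2)) →₀ ℕ) : Decidable (BadM p0 n μ) := by
  unfold BadM; exact inferInstance

lemma badM_mono {μ μ' : Option (Fin (p0 + 2)) →₀ ℕ} (h : ∀ k, μ k ≤ μ' k)
    (hb : BadM p0 n μ) : BadM p0 n μ' := by
  rcases hb with h0 | ⟨k, hk⟩
  · exact Or.inl (by have := h none; omega)
  · exact Or.inr ⟨k, le_trans hk (h _)⟩

lemma monomial_mem_I0 (μ : Option (Fin (p0 + 2)) →₀ ℕ) (c : ℚ) (h : BadM p0 n μ) :
    (monomial μ c : R p0) ∈ I0 p0 n := by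
  rcases h with h | ⟨k, hk⟩
  · rw [monomial_factor p0 μ none 1 (by omega) c, pow_one, mul_comm]
    exact Ideal.mul_mem_left _ _ (Ideal.subset_span (Or.inr rfl))
  · rw [monomial_factor p0 μ (some k) n hk c, mul_comm]
    exact Ideal.mul_mem_left _ _ (Ideal.subset_span (Or.inl ⟨k, rfl⟩))

/-- Reduction: the projection killing all bad monomials. -/
noncomputable def redF : R p0 →ₗ[ℚ] R p0 :=
  (basisMonomials (Option (Fin (p0 + 2))) ℚ).constr ℚ
    (fun μ => if BadM p0 n μ then 0 else monomial μ 1)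

lemma redF_monomial (μ : Option (Fin (p0 + 2)) →₀ ℕ) (c : ℚ) :
    redF p0 n (monomial μ c) = if BadM p0 n μ then 0 else monomial μ c := by
  classical
  have hb := congrFun (coe_basisMonomials (Option (Fin (p0 + 2))) ℚ) μ
  have h1 : (monomial μ c : R p0) = c • monomial μ 1 := by
    rw [smul_monomial, smul_eq_mul, mul_one]
  rw [h1, map_smul, ← hb, redF, Module.Basis.constr_basis]
  split_ifs with h
  · simp
  · rw [hb, smul_monomial, smul_eq_mul, mul_one]

/-- Extraction of the coefficient of `x_{m+1}^{n−1}`. -/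
noncomputable def phiF (m : Fin (p0 + 1)) : R p0 →ₗ[ℚ] R p0 :=
  (basisMonomials (Option (Fin (p0 + 2))) ℚ).constr ℚ
    (fun μ => if μ (some m.succ) = n - 1 then monomial (μ.erase (some m.succ)) 1 else 0)

lemma phiF_monomial (m : Fin (p0 + 1)) (μ : Option (Fin (p0 + 2)) →₀ ℕ) (c : ℚ) :
    phiF p0 n m (monomial μ c)
      = if μ (some m.succ) = n - 1 then monomial (μ.erase (some m.succ)) c else 0 := by
  have hb := congrFun (coe_basisMonomials (Option (Fin (p0 + 2))) ℚ) μ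
  have h1 : (monomial μ c : R p0) = c • monomial μ 1 := by
    rw [smul_monomial, smul_eq_mul, mul_one]
  rw [h1, map_smul, ← hb, phiF, Module.Basis.constr_basis]
  split_ifs with h
  · rw [smul_monomial, smul_eq_mul, mul_one]
  · simp

/-- The key projection operator along the ideal of the letter `m`. -/
noncomputable def Eop (m : Fin (p0 + 1)) : R p0 →ₗ[ℚ] R p0 :=
  redF p0 n - (redF p0 n).comp
    ((LinearMap.mulLeft ℚ (pin p0 (n - 1) m.castSucc m.succ)).comp
      ((phiF p0 n m).comp (redF p0 n)))

lemma Eop_apply (m : Fin (p0 + 1)) (f : R p0) :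
    Eop p0 n m f
      = redF p0 n f
        - redF p0 n (pin p0 (n - 1) m.castSucc m.succ * phiF p0 n m (redF p0 n f)) :=
  rfl

lemma sub_redF_mem (f : R p0) : f - redF p0 n f ∈ I0 p0 n := by
  have h2 : f = ∑ μ ∈ f.support, monomial μ (coeff μ f) := (support_sum_monomial_coeff f).symm
  rw [h2, map_sum, ← Finset.sum_sub_distrib]
  refine Ideal.sum_mem _ (fun μ _ => ?_)
  rw [redF_monomial]
  split_ifs with h
  · rw [sub_zero]
    exact monomial_mem_I0 p0 n μ _ h
  · simp

/-- The ideal of polynomials all of whose monomials are bad. -/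
noncomputable def Ibad : Ideal (R p0) where
  carrier := {f | ∀ μ ∈ f.support, BadM p0 n μ}
  zero_mem' := by simp
  add_mem' := by
    intro x y hx hy μ hμ
    rcases Finset.mem_union.1 (MvPolynomial.support_add hμ) with h | h
    exacts [hx μ h, hy μ h]
  smul_mem' := by
    classical
    intro cc x hx μ hμ
    rw [smul_eq_mul] at hμ
    have h1 := MvPolynomial.support_mul cc x hμ
    rcases Finset.mem_add.1 h1 with ⟨σ, hσ, τ, hτ, rfl⟩
    exact badM_mono p0 n (fun k => by simp [Finsupp.add_apply]) (hx τ hτ)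

lemma I0_le_Ibad : I0 p0 n ≤ Ibad p0 n := by
  rw [I0, Ideal.span_le]
  rintro g (⟨k, rfl⟩ | rfl)
  · intro μ hμ
    rw [MvPolynomial.support_X_pow] at hμ
    rcases Finset.mem_singleton.1 hμ with rfl
    exact Or.inr ⟨k, by simp⟩
  · intro μ hμ
    rw [MvPolynomial.support_X] at hμ
    rcases Finset.mem_singleton.1 hμ with rfl
    exact Or.inl (by simp)

lemma redF_eq_zero_of_bad (f : R p0) (h : f ∈ Ibad p0 n) : redF p0 n f = 0 := by
  have h2 : f = ∑ μ ∈ f.support, monomial μ (coeff μ f) := (support_sum_monomial_coeff f).symm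
  rw [h2, map_sum]
  refine Finset.sum_eq_zero fun μ hμ => ?_
  rw [redF_monomial, if_pos (h μ hμ)]

lemma redF_zero_of_mem_I0 (f : R p0) (h : f ∈ I0 p0 n) : redF p0 n f = 0 :=
  redF_eq_zero_of_bad p0 n f (I0_le_Ibad p0 n h)

lemma Eop_zero_of_mem_I0 (m : Fin (p0 + 1)) (f : R p0) (h : f ∈ I0 p0 n) :
    Eop p0 n m f = 0 := by
  rw [Eop_apply, redF_zero_of_mem_I0 p0 n f h, map_zero, mul_zero, map_zero, sub_zero]

end PartB

section PartB2

/-- The truncated sums `m_d`. -/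
noncomputable def mq (d : ℕ) (u v : Fin (p0 + 2)) : R p0 :=
  ∑ s ∈ Finset.Icc d (n - 1), X (some u) ^ s * X (some v) ^ (n - 1 + d - s)

lemma castSucc_ne_succ (a : Fin (p0 + 1)) :
    (some a.castSucc : Option (Fin (p0 + 2))) ≠ some a.succ := by
  simp only [ne_eq, Option.some.injEq]
  intro h
  have := congrArg Fin.val h
  simp at this

lemma erase_erase_decomp (ν : Option (Fin (p0 + 2)) →₀ ℕ)
    (u v : Option (Fin (p0 + 2))) (huv : u ≠ v) :
    ν = (ν.erase u).erase v + Finsupp.single u (ν u) + Finsupp.single v (ν v) := by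
  ext k
  by_cases h1 : k = u
  · subst h1
    simp [Finsupp.add_apply, Finsupp.erase_ne huv, Finsupp.erase_same,
      Finsupp.single_apply, Ne.symm huv]
  · by_cases h2 : k = v
    · subst h2
      simp [Finsupp.add_apply, Finsupp.erase_same, Finsupp.single_apply, h1,
        Ne.symm h1]
    · simp [Finsupp.add_apply, Finsupp.single_apply, Ne.symm h1, Ne.symm h2,
        Finsupp.erase_apply, h1, h2]

lemma pin_decomp (hn : 0 < n) (u v : Fin (p0 + 2)) :
    pin p0 n u v = X (some u) * pin p0 (n - 1) u v + X (some v) ^ n := by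
  rw [pin, pin, Finset.sum_range_succ']
  have hr : n - 1 + 1 = n := by omega
  rw [hr]
  congr 1
  · rw [Finset.mul_sum]
    refine Finset.sum_congr rfl fun l hl => ?_
    have h2 : n - (l + 1) = n - 1 - l := by omega
    rw [h2, pow_succ', mul_assoc]
  · simp

end PartB2

section PartB3

/-- The key reduction computation: `red(X^ν · π^{n−1}_{u,v}) = m_d(u,v) · red(X^{ν''})`. -/
lemma redF_monomial_mul_pin (hn : 0 < n) (a : Fin (p0 + 1))
    (ν : Option (Fin (p0 + 2)) →₀ ℕ) (c : ℚ) :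
    redF p0 n (monomial ν c * pin p0 (n - 1) a.castSucc a.succ)
      = mq p0 n (ν (some a.castSucc) + ν (some a.succ)) a.castSucc a.succ *
          redF p0 n (monomial ((ν.erase (some a.castSucc)).erase (some a.succ)) c) := by
  classical
  set u : Option (Fin (p0 + 2)) := some a.castSucc with hu
  set v : Option (Fin (p0 + 2)) := some a.succ with hv
  have huv : u ≠ v := castSucc_ne_succ p0 a
  set ν'' := (ν.erase u).erase v with hν''
  set i := ν u with hi
  set j := ν v with hj
  have hν''u : ν'' u = 0 := by rw [hν'', Finsupp.erase_ne huv, Finsupp.erase_same]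
  have hν''v : ν'' v = 0 := Finsupp.erase_same
  have hν''none : ν'' none = ν none := by
    rw [hν'', Finsupp.erase_ne (by simp [hv]), Finsupp.erase_ne (by simp [hu])]
  have hν''other : ∀ k, (k : Option (Fin (p0 + 2))) ≠ u → k ≠ v → ν'' k = ν k := by
    intro k h1 h2
    rw [hν'', Finsupp.erase_ne h2, Finsupp.erase_ne h1]
  have hexp : monomial ν c * pin p0 (n - 1) a.castSucc a.succ
      = ∑ l ∈ Finset.range n,
          monomial (ν + Finsupp.single u l + Finsupp.single v (n - 1 - l)) c := by
    rw [pin, Finset.mul_sum]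
    have hr : n - 1 + 1 = n := by omega
    rw [hr]
    refine Finset.sum_congr rfl fun l _ => ?_
    rw [X_pow_eq_monomial, X_pow_eq_monomial, monomial_mul, monomial_mul]
    congr 1
    · rw [hu, hv] <;> abel
    · ring
  rw [hexp, map_sum]
  by_cases hB : BadM p0 n ν''
  · rw [redF_monomial, if_pos hB, mul_zero]
    refine Finset.sum_eq_zero fun l _ => ?_
    rw [redF_monomial, if_pos]
    refine badM_mono p0 n (fun k => ?_) hB
    calc ν'' k ≤ ν k := by
          rw [hν'', Finsupp.erase_apply, Finsupp.erase_apply]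
          split_ifs <;> omega
      _ ≤ (ν + Finsupp.single u l + Finsupp.single v (n - 1 - l)) k := by
          simp only [Finsupp.add_apply]
          omega
  · rw [redF_monomial, if_neg hB]
    have hB' : ν'' none = 0 ∧ ∀ k : Fin (p0 + 2), ν'' (some k) < n := by
      rw [BadM] at hB
      push_neg at hB
      exact ⟨hB.1, fun k => hB.2 k⟩
    have hrhs : mq p0 n (i + j) a.castSucc a.succ * monomial ν'' c
        = ∑ s ∈ Finset.Icc (i + j) (n - 1),
            monomial (ν'' + Finsupp.single u s + Finsupp.single v (n - 1 + (i + j) - s)) c := by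
      rw [mq, Finset.sum_mul]
      refine Finset.sum_congr rfl fun s _ => ?_
      rw [X_pow_eq_monomial, X_pow_eq_monomial, monomial_mul, monomial_mul]
      congr 1
      · rw [hu, hv] <;> abel
      · ring
    rw [hrhs]
    have hval_u : ∀ l, (ν + Finsupp.single u l + Finsupp.single v (n - 1 - l)) u = i + l := by
      intro l
      simp only [Finsupp.add_apply, Finsupp.single_eq_same,
        Finsupp.single_eq_of_ne' (Ne.symm huv)]
      omega
    have hval_v : ∀ l, (ν + Finsupp.single u l + Finsupp.single v (n - 1 - l)) v
        = j + (n - 1 - l) := by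
      intro l
      simp only [Finsupp.add_apply, Finsupp.single_eq_same, Finsupp.single_eq_of_ne' huv]
      omega
    have hval_o : ∀ l (k : Option (Fin (p0 + 2))), k ≠ u → k ≠ v →
        (ν + Finsupp.single u l + Finsupp.single v (n - 1 - l)) k = ν k := by
      intro l k h1 h2
      simp only [Finsupp.add_apply, Finsupp.single_eq_of_ne' (Ne.symm h1),
        Finsupp.single_eq_of_ne' (Ne.symm h2)]
      omega
    have hbadiff : ∀ l, l < n →
        (BadM p0 n (ν + Finsupp.single u l + Finsupp.single v (n - 1 - l))
          ↔ ¬(j ≤ l ∧ i + l ≤ n - 1)) := by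
      intro l hl
      constructor
      · rintro (h0 | ⟨k, hk⟩)
        · exfalso
          have h2 : (ν + Finsupp.single u l + Finsupp.single v (n - 1 - l)) none = ν none :=
            hval_o l none (by simp [hu]) (by simp [hv])
          rw [h2, ← hν''none] at h0
          exact h0 hB'.1
        · by_cases hku : (some k : Option (Fin (p0 + 2))) = u
          · rw [hku, hval_u] at hk
            omega
          · by_cases hkv : (some k : Option (Fin (p0 + 2))) = v
            · rw [hkv, hval_v] at hk
              omega
            · rw [hval_o l _ hku hkv, ← hν''other _ hku hkv] at hk
              have := hB'.2 k
              omega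
      · intro hcon
        have h1 : n ≤ i + l ∨ n ≤ j + (n - 1 - l) := by omega
        rcases h1 with h1 | h1
        · exact Or.inr ⟨a.castSucc, by rw [show (some a.castSucc : Option (Fin (p0+2))) = u from rfl, hval_u]; exact h1⟩
        · exact Or.inr ⟨a.succ, by rw [show (some a.succ : Option (Fin (p0+2))) = v from rfl, hval_v]; exact h1⟩
    have hchar : ∀ l ∈ Finset.range n,
        redF p0 n (monomial (ν + Finsupp.single u l + Finsupp.single v (n - 1 - l)) c)
          = if j ≤ l ∧ i + l ≤ n - 1 then
              monomial (ν + Finsupp.single u l + Finsupp.single v (n - 1 - l)) c else 0 := by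
      intro l hl
      have hl' := Finset.mem_range.1 hl
      rw [redF_monomial]
      by_cases hc : j ≤ l ∧ i + l ≤ n - 1
      · rw [if_neg (fun hb => ((hbadiff l hl').1 hb) hc), if_pos hc]
      · rw [if_pos ((hbadiff l hl').2 hc), if_neg hc]
    rw [Finset.sum_congr rfl hchar, ← Finset.sum_filter]
    refine Finset.sum_nbij' (fun l => i + l) (fun s => s - i) ?_ ?_ ?_ ?_ ?_
    · intro l hl
      simp only [Finset.mem_filter, Finset.mem_range] at hl
      rw [Finset.mem_Icc]
      omega
    · intro s hs
      rw [Finset.mem_Icc] at hs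
      simp only [Finset.mem_filter, Finset.mem_range]
      omega
    · intro l _
      omega
    · intro s hs
      rw [Finset.mem_Icc] at hs
      omega
    · intro l hl
      simp only [Finset.mem_filter, Finset.mem_range] at hl
      have hexps : ν + Finsupp.single u l + Finsupp.single v (n - 1 - l)
          = ν'' + Finsupp.single u (i + l) + Finsupp.single v (n - 1 + (i + j) - (i + l)) := by
        ext k
        by_cases h1 : k = u
        · subst h1
          rw [hval_u]
          simp only [Finsupp.add_apply, Finsupp.single_eq_same,
            Finsupp.single_eq_of_ne' (Ne.symm huv), hν''u]
          omega
        · by_cases h2 : k = v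
          · subst h2
            rw [hval_v]
            simp only [Finsupp.add_apply, Finsupp.single_eq_same,
              Finsupp.single_eq_of_ne' huv, hν''v]
            omega
          · rw [hval_o l k h1 h2]
            simp only [Finsupp.add_apply, Finsupp.single_eq_of_ne' (Ne.symm h1),
              Finsupp.single_eq_of_ne' (Ne.symm h2), hν''other k h1 h2]
            omega
      rw [hexps]

end PartB3

section PartB4

lemma mq_mem (hn : 0 < n) (a : Fin (p0 + 1)) (d : ℕ) :
    mq p0 n d a.castSucc a.succ ∈ Ic p0 n a := by
  induction d with
  | zero =>
    have h1 : mq p0 n 0 a.castSucc a.succ = pin p0 (n - 1) a.castSucc a.succ := by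
      rw [mq, pin]
      have h2 : Finset.Icc 0 (n - 1) = Finset.range (n - 1 + 1) := by
        ext x
        simp only [Finset.mem_Icc, Finset.mem_range]
        omega
      rw [h2]
      refine Finset.sum_congr rfl fun s _ => ?_
      have h3 : n - 1 + 0 - s = n - 1 - s := by omega
      rw [h3]
    rw [h1]
    exact Ideal.subset_span (Or.inr (Or.inr rfl))
  | succ d ih =>
    have key : mq p0 n (d + 1) a.castSucc a.succ
        = X (some a.castSucc) * mq p0 n d a.castSucc a.succ
          - (if d + 1 ≤ n then X (some a.castSucc) ^ n * X (some a.succ) ^ d else 0) := by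
      by_cases hd : d + 1 ≤ n
      · rw [if_pos hd, mq, mq, Finset.mul_sum]
        have hA : ∀ s ∈ Finset.Icc d (n - 1),
            X (some a.castSucc) * (X (some a.castSucc) ^ s * X (some a.succ) ^ (n - 1 + d - s))
              = (X (some a.castSucc) ^ (s + 1) * X (some a.succ) ^ (n - 1 + (d + 1) - (s + 1))
                  : R p0) := by
          intro s hs
          rw [Finset.mem_Icc] at hs
          have h2 : n - 1 + (d + 1) - (s + 1) = n - 1 + d - s := by omega
          rw [h2, pow_succ', mul_assoc]
        rw [Finset.sum_congr rfl hA]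
        have hB : (∑ s ∈ Finset.Icc d (n - 1),
              (X (some a.castSucc) ^ (s + 1) * X (some a.succ) ^ (n - 1 + (d + 1) - (s + 1))
                : R p0))
            = ∑ s ∈ Finset.Icc (d + 1) n,
                (X (some a.castSucc) ^ s * X (some a.succ) ^ (n - 1 + (d + 1) - s) : R p0) := by
          refine Finset.sum_nbij' (fun s => s + 1) (fun s => s - 1) ?_ ?_ ?_ ?_ ?_
          · intro s hs
            rw [Finset.mem_Icc] at hs
            rw [Finset.mem_Icc]
            omega
          · intro s hs
            rw [Finset.mem_Icc] at hs
            rw [Finset.mem_Icc]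
            omega
          · intro s _
            omega
          · intro s hs
            rw [Finset.mem_Icc] at hs
            omega
          · intro s _
            rfl
        rw [hB]
        have h4 : n - 1 + 1 = n := by omega
        have h5 := Finset.sum_Icc_succ_top (a := d + 1) (b := n - 1)
          (f := fun t => (X (some a.castSucc) ^ t * X (some a.succ) ^ (n - 1 + (d + 1) - t)
            : R p0)) (by omega)
        rw [h4] at h5
        rw [h5]
        have h6 : n - 1 + (d + 1) - n = d := by omega
        rw [h6]
        abel
      · rw [if_neg hd]
        have he1 : Finset.Icc (d + 1) (n - 1) = ∅ := Finset.Icc_eq_empty (by omega)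
        have he2 : Finset.Icc d (n - 1) = ∅ := Finset.Icc_eq_empty (by omega)
        rw [mq, mq, he1, he2, Finset.sum_empty, Finset.sum_empty, mul_zero, sub_zero]
    rw [key]
    refine sub_mem (Ideal.mul_mem_left _ _ ih) ?_
    split_ifs
    · exact Ideal.mul_mem_right _ _ (Ideal.span_mono Set.subset_union_left
        (Ideal.subset_span (Or.inl ⟨a.castSucc, rfl⟩)))
    · exact zero_mem _

lemma phiF_monomial_mul (m : Fin (p0 + 1)) (σ : Option (Fin (p0 + 2)) →₀ ℕ)
    (hσ : σ (some m.succ) = 0) (c : ℚ) (f : R p0) :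
    phiF p0 n m (monomial σ c * f) = monomial σ c * phiF p0 n m f := by
  induction f using MvPolynomial.induction_on' with
  | add p q hp hq => rw [mul_add, map_add, map_add, hp, hq, mul_add]
  | monomial μ b =>
    rw [monomial_mul, phiF_monomial, phiF_monomial]
    have h1 : (σ + μ) (some m.succ) = μ (some m.succ) := by
      rw [Finsupp.add_apply, hσ, zero_add]
    rw [h1]
    split_ifs with h
    · rw [monomial_mul, Finsupp.erase_add,
        Finsupp.erase_of_notMem_support (f := σ) (by simp [Finsupp.mem_support_iff, hσ])]
    · rw [mul_zero]

lemma Eop_mul_pin_self (hn : 0 < n) (m : Fin (p0 + 1)) (r : R p0) :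
    Eop p0 n m (r * pin p0 (n - 1) m.castSucc m.succ) = 0 := by
  induction r using MvPolynomial.induction_on' with
  | add p q hp hq => rw [add_mul, map_add, hp, hq, add_zero]
  | monomial ν c =>
    classical
    set u : Option (Fin (p0 + 2)) := some m.castSucc with hu
    set v : Option (Fin (p0 + 2)) := some m.succ with hv
    have huv : u ≠ v := castSucc_ne_succ p0 m
    set ν'' := (ν.erase u).erase v with hν''
    have hν''u : ν'' u = 0 := by rw [hν'', Finsupp.erase_ne huv, Finsupp.erase_same]
    have hν''v : ν'' v = 0 := Finsupp.erase_same
    set d := ν u + ν v with hd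
    rw [Eop_apply, redF_monomial_mul_pin p0 n hn m ν c]
    by_cases hB : BadM p0 n ν''
    · rw [redF_monomial, if_pos hB]
      simp
    · rw [redF_monomial, if_neg hB]
      have hphi : phiF p0 n m (mq p0 n d m.castSucc m.succ * monomial ν'' c)
          = if d ≤ n - 1 then monomial (ν'' + Finsupp.single u d) c else 0 := by
        rw [mq, Finset.sum_mul, map_sum]
        have h1 : ∀ s ∈ Finset.Icc d (n - 1),
            phiF p0 n m (X (some m.castSucc) ^ s * X (some m.succ) ^ (n - 1 + d - s)
                * monomial ν'' c)
              = if s = d then monomial (ν'' + Finsupp.single u d) c else 0 := by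
          intro s hs
          rw [Finset.mem_Icc] at hs
          rw [X_pow_eq_monomial, X_pow_eq_monomial, monomial_mul, monomial_mul, one_mul,
            one_mul, phiF_monomial]
          have hval : (Finsupp.single u s + Finsupp.single v (n - 1 + d - s) + ν'') v
              = n - 1 + d - s := by
            simp only [Finsupp.add_apply, Finsupp.single_eq_same,
              Finsupp.single_eq_of_ne' huv, hν''v]
            omega
          rw [show (some m.succ : Option (Fin (p0 + 2))) = v from rfl, hval]
          by_cases hsd : s = d
          · subst hsd
            rw [if_pos (by omega), if_pos rfl]
            have hkey : Finsupp.erase v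
                  (Finsupp.single u d + Finsupp.single v (n - 1 + d - d) + ν'')
                = ν'' + Finsupp.single u d := by
              ext k
              by_cases h1 : k = v
              · subst h1
                simp [Finsupp.erase_same, Finsupp.add_apply, hν''v,
                  Finsupp.single_eq_of_ne' huv]
              · by_cases h2 : k = u
                · subst h2
                  simp [Finsupp.erase_ne h1, Finsupp.add_apply, hν''u,
                    Finsupp.single_eq_same, Finsupp.single_eq_of_ne' (Ne.symm huv)]
                · simp [Finsupp.erase_ne h1, Finsupp.add_apply,
                    Finsupp.single_eq_of_ne' (Ne.symm h1), Finsupp.single_eq_of_ne' (Ne.symm h2)]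
            rw [hkey]
          · rw [if_neg (by omega), if_neg hsd]
        rw [Finset.sum_congr rfl h1, Finset.sum_ite_eq' (Finset.Icc d (n - 1)) d]
        by_cases h2 : d ≤ n - 1
        · rw [if_pos (Finset.mem_Icc.2 ⟨le_refl d, h2⟩), if_pos h2]
        · rw [if_neg (fun hc => h2 (Finset.mem_Icc.1 hc).2), if_neg h2]
      rw [hphi]
      split_ifs with hdn
      · have h2 := redF_monomial_mul_pin p0 n hn m (ν'' + Finsupp.single u d) c
        have h3 : (ν'' + Finsupp.single u d) (some m.castSucc) = d := by
          rw [show (some m.castSucc : Option (Fin (p0 + 2))) = u from rfl,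
            Finsupp.add_apply, hν''u, Finsupp.single_eq_same, zero_add]
        have h4 : (ν'' + Finsupp.single u d) (some m.succ) = 0 := by
          rw [show (some m.succ : Option (Fin (p0 + 2))) = v from rfl,
            Finsupp.add_apply, hν''v, Finsupp.single_eq_of_ne' huv, zero_add]
        have h5 : (((ν'' + Finsupp.single u d).erase (some m.castSucc)).erase (some m.succ))
            = ν'' := by
          rw [show (some m.castSucc : Option (Fin (p0 + 2))) = u from rfl,
            show (some m.succ : Option (Fin (p0 + 2))) = v from rfl]
          ext k
          by_cases h1 : k = v
          · subst h1
            rw [Finsupp.erase_same, hν''v]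
          · rw [Finsupp.erase_ne h1]
            by_cases h2 : k = u
            · subst h2
              rw [Finsupp.erase_same, hν''u]
            · rw [Finsupp.erase_ne h2, Finsupp.add_apply,
                Finsupp.single_eq_of_ne' (Ne.symm h2), add_zero]
        rw [h3, h4, h5, add_zero] at h2
        rw [mul_comm (pin p0 (n - 1) m.castSucc m.succ), h2, redF_monomial, if_neg hB,
          sub_self]
      · have hmq : mq p0 n d m.castSucc m.succ = 0 := by
          rw [mq, Finset.Icc_eq_empty (by omega), Finset.sum_empty]
        rw [hmq]
        simp

end PartB4

section PartB5

lemma Eop_mul_pin_lt (hn : 0 < n) (m a : Fin (p0 + 1)) (ham : a < m) (r : R p0) :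
    Eop p0 n m (r * pin p0 (n - 1) a.castSucc a.succ) ∈ Ic p0 n a := by
  have hI0 : I0 p0 n ≤ Ic p0 n a := Ideal.span_mono Set.subset_union_left
  have hne1 : (some a.castSucc : Option (Fin (p0 + 2))) ≠ some m.succ := by
    simp only [ne_eq, Option.some.injEq, Fin.ext_iff, Fin.coe_castSucc, Fin.val_succ]
    have := Fin.lt_def.1 ham
    omega
  have hne2 : (some a.succ : Option (Fin (p0 + 2))) ≠ some m.succ := by
    simp only [ne_eq, Option.some.injEq, Fin.ext_iff, Fin.val_succ]
    have := Fin.lt_def.1 ham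
    omega
  induction r using MvPolynomial.induction_on' with
  | add p q hp hq =>
    rw [add_mul, map_add]
    exact add_mem hp hq
  | monomial ν c =>
    rw [Eop_apply, redF_monomial_mul_pin p0 n hn a ν c]
    refine sub_mem (Ideal.mul_mem_right _ _ (mq_mem p0 n hn a _)) ?_
    have hcomm : ∀ gg : R p0,
        phiF p0 n m (mq p0 n (ν (some a.castSucc) + ν (some a.succ)) a.castSucc a.succ * gg)
          = mq p0 n (ν (some a.castSucc) + ν (some a.succ)) a.castSucc a.succ
              * phiF p0 n m gg := by
      intro gg
      rw [mq, Finset.sum_mul, map_sum, Finset.sum_mul]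
      refine Finset.sum_congr rfl fun s _ => ?_
      rw [X_pow_eq_monomial, X_pow_eq_monomial, monomial_mul]
      rw [phiF_monomial_mul p0 n m _ (by
        rw [Finsupp.add_apply, Finsupp.single_eq_of_ne' hne1, Finsupp.single_eq_of_ne' hne2,
          add_zero])]
    rw [hcomm]
    set x := pin p0 (n - 1) m.castSucc m.succ
      * (mq p0 n (ν (some a.castSucc) + ν (some a.succ)) a.castSucc a.succ
          * phiF p0 n m (redF p0 n
              (monomial ((ν.erase (some a.castSucc)).erase (some a.succ)) c))) with hx
    have h4 : x ∈ Ic p0 n a := by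
      rw [hx, mul_left_comm]
      exact Ideal.mul_mem_right _ _ (mq_mem p0 n hn a _)
    have h5 := hI0 (sub_redF_mem p0 n x)
    have h6 := sub_mem h4 h5
    rwa [sub_sub_cancel] at h6

lemma Eop_mul_gen_lt (hn : 0 < n) (m a : Fin (p0 + 1)) (ham : a < m) (g : R p0)
    (hg : g ∈ piGens p0 n a) (r : R p0) :
    Eop p0 n m (r * g) ∈ Ic p0 n a := by
  rcases hg with rfl | rfl
  · rw [pin_decomp p0 n hn]
    have he : r * (X (some a.castSucc) * pin p0 (n - 1) a.castSucc a.succ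
          + X (some a.succ) ^ n)
        = (r * X (some a.castSucc)) * pin p0 (n - 1) a.castSucc a.succ
          + r * X (some a.succ) ^ n := by ring
    rw [he, map_add]
    refine add_mem (Eop_mul_pin_lt p0 n hn m a ham _) ?_
    rw [Eop_zero_of_mem_I0 p0 n m _
      (Ideal.mul_mem_left _ _ (Ideal.subset_span (Or.inl ⟨a.succ, rfl⟩)))]
    exact zero_mem _
  · exact Eop_mul_pin_lt p0 n hn m a ham r

lemma Eop_mul_gen_self (hn : 0 < n) (m : Fin (p0 + 1)) (g : R p0)
    (hg : g ∈ piGens p0 n m) (r : R p0) :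
    Eop p0 n m (r * g) = 0 := by
  rcases hg with rfl | rfl
  · rw [pin_decomp p0 n hn]
    have he : r * (X (some m.castSucc) * pin p0 (n - 1) m.castSucc m.succ
          + X (some m.succ) ^ n)
        = (r * X (some m.castSucc)) * pin p0 (n - 1) m.castSucc m.succ
          + r * X (some m.succ) ^ n := by ring
    rw [he, map_add, Eop_mul_pin_self p0 n hn m _, Eop_zero_of_mem_I0 p0 n m _
      (Ideal.mul_mem_left _ _ (Ideal.subset_span (Or.inl ⟨m.succ, rfl⟩))), add_zero]
  · exact Eop_mul_pin_self p0 n hn m r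

lemma sub_Eop_mem (m : Fin (p0 + 1)) (f : R p0) :
    f - Eop p0 n m f ∈ Ic p0 n m := by
  have hI0 : I0 p0 n ≤ Ic p0 n m := Ideal.span_mono Set.subset_union_left
  rw [Eop_apply]
  have h1 : f - redF p0 n f ∈ Ic p0 n m := hI0 (sub_redF_mem p0 n f)
  set x := pin p0 (n - 1) m.castSucc m.succ * phiF p0 n m (redF p0 n f) with hx
  have h2 : x ∈ Ic p0 n m :=
    Ideal.mul_mem_right _ _ (Ideal.subset_span (Or.inr (Or.inr rfl)))
  have h3 : redF p0 n x ∈ Ic p0 n m := by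
    have h4 := hI0 (sub_redF_mem p0 n x)
    have h5 := sub_mem h2 h4
    rwa [sub_sub_cancel] at h5
  have he : f - (redF p0 n f - redF p0 n x) = (f - redF p0 n f) + redF p0 n x := by ring
  rw [he]
  exact add_mem h1 h3

/-- Patching compatible local data into a single global element. -/
lemma patch (hn : 0 < n) (L : Finset (Fin (p0 + 1))) (g : Fin (p0 + 1) → R p0)
    (hg : ∀ a ∈ L, ∀ b ∈ L, a ≠ b → g a - g b ∈ Jdiff p0 n a b) :
    ∃ f : R p0, ∀ a ∈ L, f - g a ∈ Ic p0 n a := by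
  classical
  revert hg
  induction L using Finset.induction_on_max with
  | empty => exact fun _ => ⟨0, fun a ha => absurd ha (Finset.notMem_empty a)⟩
  | insert m s hmax ih =>
    intro hg
    obtain ⟨f₀, hf₀⟩ := ih (fun a ha b hb hab =>
      hg a (Finset.mem_insert_of_mem ha) b (Finset.mem_insert_of_mem hb) hab)
    have hJle : ∀ b, Ic p0 n b ≤ Jdiff p0 n b m :=
      fun b => Ideal.span_mono Set.subset_union_left
    have hEt : ∀ b ∈ s, Eop p0 n m (f₀ - g m) ∈ Ic p0 n b := by
      intro b hb
      have h1 : f₀ - g m ∈ Jdiff p0 n b m := by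
        have h2 := hJle b (hf₀ b hb)
        have h3 : g b - g m ∈ Jdiff p0 n b m :=
          hg b (Finset.mem_insert_of_mem hb) m (Finset.mem_insert_self m s)
            (ne_of_lt (hmax b hb))
        have h4 : f₀ - g m = (f₀ - g b) + (g b - g m) := by ring
        rw [h4]
        exact add_mem h2 h3
      rw [Jdiff] at h1
      obtain ⟨cf, hsupp, hsum⟩ := Submodule.mem_span_set.1 h1
      rw [← hsum, Finsupp.sum, map_sum]
      refine Ideal.sum_mem _ fun gi hgi => ?_
      have hgen : gi ∈ gensDiff p0 n b m := hsupp hgi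
      rw [smul_eq_mul]
      rcases hgen with hgen | hgen
      · rcases hgen with hgen | hgen
        · rw [Eop_zero_of_mem_I0 p0 n m _ (Ideal.mul_mem_left _ _ (Ideal.subset_span hgen))]
          exact zero_mem _
        · exact Eop_mul_gen_lt p0 n hn m b (hmax b hb) gi hgen _
      · rw [Eop_mul_gen_self p0 n hn m gi hgen _]
        exact zero_mem _
    refine ⟨f₀ - Eop p0 n m (f₀ - g m), ?_⟩
    intro a ha
    rcases Finset.mem_insert.1 ha with h | ha
    · subst h
      have heq : f₀ - Eop p0 n a (f₀ - g a) - g a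
          = (f₀ - g a) - Eop p0 n a (f₀ - g a) := by ring
      rw [heq]
      exact sub_Eop_mem p0 n a _
    · have heq : f₀ - Eop p0 n m (f₀ - g m) - g a
          = (f₀ - g a) - Eop p0 n m (f₀ - g m) := by ring
      rw [heq]
      exact sub_mem (hf₀ a ha) (hEt a ha)

/-- Symmetry of the two-letter ideals. -/
lemma Jdiff_symm (a b : Fin (p0 + 1)) : Jdiff p0 n a b = Jdiff p0 n b a := by
  rw [Jdiff, Jdiff]
  congr 1
  rw [gensDiff, gensDiff, gensC, gensC]
  ext x
  simp only [Set.mem_union]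
  tauto

end PartB5






end KRPositiveBraid

open KRPositiveBraid in
/-- Theorem 19: the first `sl(n)` homology group of a positive braid knot is trivial,
for every positive integer `n`: the beginning of the Khovanov–Rozansky complex of the
closure of any positive braid word is exact at homological degree 1. -/
theorem slN_first_homology_positive_braid_trivial
    (p0 n : ℕ) (hn : 0 < n) (w : List (Fin (p0 + 1))) :
    LinearMap.ker (d1 p0 n w) = LinearMap.range (d0 p0 n w) := by
  classical
  apply le_antisymm
  · -- ker ⊆ range
    intro x hx
    rw [LinearMap.mem_ker] at hx
    have hx1 : d1same p0 n w x = 0 := by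
      have := congrArg Prod.fst hx
      simpa [d1, LinearMap.prod_apply] using this
    have hx2 : d1diff p0 n w x = 0 := by
      have := congrArg Prod.snd hx
      simpa [d1, LinearMap.prod_apply] using this
    choose f hf using fun c => Submodule.Quotient.mk_surjective _ (x c)
    -- same-letter congruences
    have hsame : ∀ c d : Fin w.length, w.get c = w.get d →
        f c - f d ∈ Ic p0 n (w.get c) := by
      intro c d hcd
      rcases lt_trichotomy c.1 d.1 with h | h | h
      · set pr : SamePair p0 w :=
          ⟨(c, d), ⟨Or.inr ⟨congrArg Fin.val hcd, h⟩, congrArg Fin.val hcd⟩⟩ with hpr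
        have h0 := congrFun hx1 pr
        simp only [d1same, LinearMap.pi_apply, LinearMap.sub_apply, LinearMap.coe_comp,
          Function.comp_apply, LinearMap.proj_apply, Pi.zero_apply, hpr] at h0
        rw [← hf c, ← hf d] at h0
        simp only [Submodule.mapQ_apply] at h0
        have h1 := (Submodule.Quotient.eq _).1 (sub_eq_zero.1 h0)
        rw [← map_sub] at h1
        exact mem_Ic_of_sigma_mem p0 n (w.get c) _ h1
      · have : c = d := Fin.ext h
        subst this
        simp only [sub_self]
        exact zero_mem _
      · set pr : SamePair p0 w :=
          ⟨(d, c), ⟨Or.inr ⟨(congrArg Fin.val hcd).symm, h⟩, (congrArg Fin.val hcd).symm⟩⟩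
          with hpr
        have h0 := congrFun hx1 pr
        simp only [d1same, LinearMap.pi_apply, LinearMap.sub_apply, LinearMap.coe_comp,
          Function.comp_apply, LinearMap.proj_apply, Pi.zero_apply, hpr] at h0
        rw [← hf d, ← hf c] at h0
        simp only [Submodule.mapQ_apply] at h0
        have h1 := (Submodule.Quotient.eq _).1 (sub_eq_zero.1 h0)
        rw [← map_sub] at h1
        have h2 := mem_Ic_of_sigma_mem p0 n (w.get d) _ h1
        have h3 : f c - f d = -(f d - f c) := by ring
        rw [h3, hcd]
        exact neg_mem h2
    -- different-letter congruences
    have hdiff : ∀ c d : Fin w.length, w.get c ≠ w.get d →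
        f c - f d ∈ Jdiff p0 n (w.get c) (w.get d) := by
      intro c d hcd
      have hval : (w.get c : ℕ) ≠ (w.get d : ℕ) := fun h => hcd (Fin.val_injective h)
      rcases lt_or_gt_of_ne hval with h | h
      · set pr : DiffPair p0 w := ⟨(c, d), ⟨Or.inl h, hval⟩⟩ with hpr
        have h0 := congrFun hx2 pr
        simp only [d1diff, LinearMap.pi_apply, LinearMap.sub_apply, LinearMap.coe_comp,
          Function.comp_apply, LinearMap.proj_apply, Pi.zero_apply, hpr] at h0
        rw [← hf c, ← hf d] at h0
        have h1 := (Submodule.Quotient.eq _).1 (sub_eq_zero.1 h0)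
        simpa using h1
      · set pr : DiffPair p0 w := ⟨(d, c), ⟨Or.inl h, Ne.symm hval⟩⟩ with hpr
        have h0 := congrFun hx2 pr
        simp only [d1diff, LinearMap.pi_apply, LinearMap.sub_apply, LinearMap.coe_comp,
          Function.comp_apply, LinearMap.proj_apply, Pi.zero_apply, hpr] at h0
        rw [← hf d, ← hf c] at h0
        have h1 := (Submodule.Quotient.eq _).1 (sub_eq_zero.1 h0)
        have h2 : f d - f c ∈ Jdiff p0 n (w.get d) (w.get c) := by simpa using h1
        rw [Jdiff_symm] at h2
        have h3 : f c - f d = -(f d - f c) := by ring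
        rw [h3]
        exact neg_mem h2
    -- letter-level patching
    set L : Finset (Fin (p0 + 1)) := Finset.image (fun c => w.get c) Finset.univ with hL
    have hex : ∀ a ∈ L, ∃ c : Fin w.length, w.get c = a := by
      intro a ha
      rw [hL, Finset.mem_image] at ha
      obtain ⟨c, _, hc⟩ := ha
      exact ⟨c, hc⟩
    choose cc hcc using hex
    set g : Fin (p0 + 1) → R p0 := fun a => if ha : a ∈ L then f (cc a ha) else 0 with hgdef
    have hgmem : ∀ a (ha : a ∈ L), g a = f (cc a ha) := by
      intro a ha
      rw [hgdef]
      exact dif_pos ha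
    have hgcond : ∀ a ∈ L, ∀ b ∈ L, a ≠ b → g a - g b ∈ Jdiff p0 n a b := by
      intro a ha b hb hab
      rw [hgmem a ha, hgmem b hb]
      have h1 : w.get (cc a ha) ≠ w.get (cc b hb) := by
        rw [hcc a ha, hcc b hb]
        exact hab
      have h2 := hdiff (cc a ha) (cc b hb) h1
      rwa [hcc a ha, hcc b hb] at h2
    obtain ⟨F, hF⟩ := patch p0 n hn L g hgcond
    refine ⟨Submodule.Quotient.mk F, ?_⟩
    funext c
    have h3 : (d0 p0 n w) (Submodule.Quotient.mk F) c = Submodule.Quotient.mk F := by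
      simp only [d0, LinearMap.pi_apply, Submodule.mapQ_apply, LinearMap.id_apply]
      rfl
    rw [h3, ← hf c, Submodule.Quotient.eq]
    have hwc : w.get c ∈ L := by
      rw [hL, Finset.mem_image]
      exact ⟨c, Finset.mem_univ c, rfl⟩
    have h4 := hF (w.get c) hwc
    rw [hgmem _ hwc] at h4
    have h6 : f (cc _ hwc) - f c ∈ Ic p0 n (w.get c) := by
      have h7 := hsame (cc _ hwc) c (by rw [hcc _ hwc])
      rwa [hcc _ hwc] at h7
    have h8 : F - f c = (F - f (cc _ hwc)) + (f (cc _ hwc) - f c) := by ring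
    simp only [Submodule.restrictScalars_mem]
    rw [h8]
    exact add_mem h4 h6
  · -- range ⊆ ker
    rintro x ⟨z, rfl⟩
    rw [LinearMap.mem_ker]
    obtain ⟨r, rfl⟩ := Submodule.Quotient.mk_surjective _ z
    have hd0 : ∀ c, d0 p0 n w (Submodule.Quotient.mk r) c = Submodule.Quotient.mk r := by
      intro c
      simp only [d0, LinearMap.pi_apply, Submodule.mapQ_apply, LinearMap.id_apply]
      rfl
    rw [d1, LinearMap.prod_apply]
    have hA : d1same p0 n w (d0 p0 n w (Submodule.Quotient.mk r)) = 0 := by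
      funext pr
      simp only [d1same, LinearMap.pi_apply, LinearMap.sub_apply, LinearMap.coe_comp,
        Function.comp_apply, LinearMap.proj_apply, hd0, Submodule.mapQ_apply, Pi.zero_apply]
      exact sub_self _
    have hB : d1diff p0 n w (d0 p0 n w (Submodule.Quotient.mk r)) = 0 := by
      funext pr
      simp only [d1diff, LinearMap.pi_apply, LinearMap.sub_apply, LinearMap.coe_comp,
        Function.comp_apply, LinearMap.proj_apply, hd0, Submodule.mapQ_apply, Pi.zero_apply,
        LinearMap.id_apply]
      have e1 : ∀ (I J : Ideal (R p0)) (h : Submodule.restrictScalars ℚ I ≤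
          Submodule.comap LinearMap.id (Submodule.restrictScalars ℚ J)),
          Submodule.mapQ (Submodule.restrictScalars ℚ I) (Submodule.restrictScalars ℚ J)
            LinearMap.id h (Submodule.Quotient.mk r) = Submodule.Quotient.mk r :=
        fun _ _ _ => rfl
      exact sub_eq_zero.2 ((e1 _ _ _).trans (e1 _ _ _).symm)
    simp only [Function.prod, hA, hB]
    rfl
end

section
/- Theorem 6: For every finite graph G and positive integer n, the graded Euler characteristic of the chain complex C_n(G), namely Σ_i (−1)^i Σ_j q^j rank_ℤ C_n^{i,j}(G), equals the n-th specialization of the dichromatic polynomial: P_{G,n}(q) = Σ_{s ⊆ E(G)} (−1)^{|s|} q^{n|s|} (1+q+⋯+q^n)^{k(s)}, as an identity of Laurent polynomials in q. -/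
/-!
Statement 2 (Theorem 6): for every finite graph `G` and positive integer `n`, the graded
Euler characteristic `Σ_i (−1)^i Σ_j q^j rank_ℤ C_n^{i,j}(G)` of the chain complex
`C_n(G)` equals the `n`-th specialization of the dichromatic polynomial
`P_{G,n}(q) = Σ_{s ⊆ E(G)} (−1)^{|s|} q^{n|s|} (1+q+⋯+q^n)^{k(s)}`.

The chain group `C_n^i(G) = ⊕_{|ε|=i} V^{⊗k(s_ε)}{n|ε|}` is free with basis the pairs
`(s, b)` where `s ⊆ E(G)` with `|s| = i` and `b` assigns to each connected component of
`[G : s]` a basis vector `X^{b(c)}` of `V` (so `0 ≤ b(c) ≤ n`); the degree of such a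
basis element is `n|s| + Σ_c (n − b(c))`.
-/

structure MultiGraph where
  V : Type
  E : Type
  finV : Finite V
  finE : Finite E
  ends : E → Sym2 V

attribute [instance] MultiGraph.finV MultiGraph.finE

namespace MultiGraph

def spanning (G : MultiGraph) (s : Set G.E) : SimpleGraph G.V where
  Adj a b := a ≠ b ∧ ∃ e ∈ s, G.ends e = s(a, b)
  symm := ⟨by
    rintro a b ⟨hab, e, he, h⟩
    exact ⟨hab.symm, e, he, by rw [h, Sym2.eq_swap]⟩⟩
  loopless := ⟨by rintro a ⟨h, -⟩; exact h rfl⟩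

/-- `k(s)`: the number of connected components of the spanning subgraph `[G : s]`. -/
noncomputable def kcomp (G : MultiGraph) (s : Finset G.E) : ℕ :=
  Nat.card (G.spanning ↑s).ConnectedComponent

/-- A basis element of the cube of the complex `C_n(G)`: a state `s ⊆ E(G)` together
with an assignment of a basis vector `X^{b(c)} ∈ {X^0, …, X^n}` of `V` to each
connected component `c` of `[G : s]`. -/
def CubeBasis (G : MultiGraph) (n : ℕ) :=
  Σ s : Finset G.E, ((G.spanning ↑s).ConnectedComponent → Fin (n + 1))

/-- The internal degree of a basis element: `n|s|` (the degree shift) plus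
`Σ_c deg X^{b(c)} = Σ_c (n − b(c))`. -/
noncomputable def cubeDeg (G : MultiGraph) (n : ℕ) (p : CubeBasis G n) : ℕ :=
  letI := Fintype.ofFinite (G.spanning ↑p.1).ConnectedComponent
  n * p.1.card + ∑ c, (n - (p.2 c : ℕ))

/-- `rank_ℤ C_n^{i,j}(G)`: the number of basis elements of homological degree `i`
and internal degree `j`. -/
noncomputable def chainRank (G : MultiGraph) (n : ℕ) (i j : ℕ) : ℕ :=
  Nat.card {p : CubeBasis G n // p.1.card = i ∧ cubeDeg G n p = j}

open Polynomial

/-- The graded Euler characteristic `Σ_i (−1)^i Σ_j q^j rank_ℤ C_n^{i,j}(G)`. -/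
noncomputable def gradedEulerChar (G : MultiGraph) (n : ℕ) : Polynomial ℤ :=
  ∑ᶠ i : ℕ, ∑ᶠ j : ℕ, Polynomial.C ((-1 : ℤ) ^ i * (chainRank G n i j : ℤ)) * X ^ j

/-- The `n`-th specialization of the dichromatic polynomial,
`P_{G,n}(q) = Σ_{s ⊆ E(G)} (−1)^{|s|} q^{n|s|} (1+q+⋯+q^n)^{k(s)}`. -/
noncomputable def PGn (G : MultiGraph) (n : ℕ) : Polynomial ℤ :=
  letI : Fintype G.E := Fintype.ofFinite G.E
  ∑ s : Finset G.E, Polynomial.C ((-1 : ℤ) ^ s.card) * X ^ (n * s.card) *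
    (∑ a ∈ Finset.range (n + 1), X ^ a) ^ G.kcomp s

end MultiGraph

theorem gradedEulerChar_eq_PGn (G : MultiGraph) (n : ℕ) (hn : 0 < n) :
    MultiGraph.gradedEulerChar G n = MultiGraph.PGn G n := by
  classical
  letI : Fintype G.E := Fintype.ofFinite G.E
  letI F : ∀ s : Finset G.E, Fintype (G.spanning ↑s).ConnectedComponent :=
    fun s => Fintype.ofFinite _
  letI : Fintype G.V := Fintype.ofFinite G.V
  letI : Fintype (MultiGraph.CubeBasis G n) :=
    (inferInstance : Fintype (Σ s : Finset G.E,
      ((G.spanning ↑s).ConnectedComponent → Fin (n + 1))))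
  open Finset Polynomial MultiGraph in
  set m := Fintype.card G.E with hm
  set J := n * m + n * Nat.card G.V with hJ
  have hcard : ∀ p : CubeBasis G n, p.1.card ≤ m := fun p => Finset.card_le_univ _
  have hcomp : ∀ s : Finset G.E,
      Fintype.card (G.spanning ↑s).ConnectedComponent ≤ Nat.card G.V := by
    intro s
    rw [Nat.card_eq_fintype_card]
    exact Fintype.card_le_of_surjective (SimpleGraph.connectedComponentMk _)
      (fun c => c.exists_rep)
  have hdeg : ∀ p : CubeBasis G n, cubeDeg G n p ≤ J := by
    intro p
    show n * p.1.card + (∑ c, (n - (p.2 c : ℕ))) ≤ J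
    have h2 : (∑ c, (n - (p.2 c : ℕ))) ≤ n * Nat.card G.V := by
      calc (∑ c : (G.spanning ↑p.1).ConnectedComponent, (n - (p.2 c : ℕ)))
          ≤ ∑ _c : (G.spanning ↑p.1).ConnectedComponent, n :=
            Finset.sum_le_sum fun c _ => Nat.sub_le _ _
        _ = Fintype.card (G.spanning ↑p.1).ConnectedComponent * n := by
            rw [Finset.sum_const, smul_eq_mul, Finset.card_univ]
        _ ≤ Nat.card G.V * n := Nat.mul_le_mul_right _ (hcomp p.1)
        _ = n * Nat.card G.V := Nat.mul_comm _ _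
    have h1 : n * p.1.card ≤ n * m := Nat.mul_le_mul_left _ (hcard p)
    omega
  have hrank : ∀ i j, chainRank G n i j =
      (Finset.univ.filter
        fun p : CubeBasis G n => p.1.card = i ∧ cubeDeg G n p = j).card := by
    intro i j
    rw [chainRank, Nat.card_eq_fintype_card, Fintype.card_subtype]
  have hEuler : gradedEulerChar G n
      = ∑ p : CubeBasis G n, C ((-1 : ℤ) ^ p.1.card) * X ^ cubeDeg G n p := by
    rw [gradedEulerChar]
    rw [finsum_eq_finset_sum_of_support_subset _ (s := Finset.range (m + 1)) ?_]
    · have hinner : ∀ i ∈ Finset.range (m + 1),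
          (∑ᶠ j : ℕ, C ((-1 : ℤ) ^ i * (chainRank G n i j : ℤ)) * X ^ j)
          = ∑ j ∈ Finset.range (J + 1),
              C ((-1 : ℤ) ^ i * (chainRank G n i j : ℤ)) * X ^ j := by
        intro i _
        apply finsum_eq_finset_sum_of_support_subset
        intro j hj
        simp only [Function.mem_support] at hj
        by_contra hmem
        simp only [Finset.coe_range, Set.mem_Iio, not_lt, Nat.lt_succ_iff] at hmem
        apply hj
        have hz : chainRank G n i j = 0 := by
          rw [hrank, Finset.card_eq_zero, Finset.filter_eq_empty_iff]
          rintro p - ⟨-, hd⟩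
          have := hdeg p
          omega
        simp [hz]
      rw [Finset.sum_congr rfl hinner, ← Finset.sum_product']
      rw [← Finset.sum_fiberwise_of_maps_to
        (g := fun p : CubeBasis G n => (p.1.card, cubeDeg G n p))
        (t := Finset.range (m + 1) ×ˢ Finset.range (J + 1))
        (fun p _ => by
          simp only [Finset.mem_product, Finset.mem_range, Nat.lt_succ_iff]
          exact ⟨hcard p, hdeg p⟩)
        (fun p => C ((-1 : ℤ) ^ p.1.card) * X ^ cubeDeg G n p)]
      apply Finset.sum_congr rfl
      rintro ⟨i, j⟩ -
      have hconst : ∀ p ∈ Finset.univ.filter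
          (fun p : CubeBasis G n => (p.1.card, cubeDeg G n p) = (i, j)),
          C ((-1 : ℤ) ^ p.1.card) * X ^ cubeDeg G n p = C ((-1 : ℤ) ^ i) * X ^ j := by
        intro p hp
        simp only [Finset.mem_filter, Prod.mk.injEq] at hp
        rw [hp.2.1, hp.2.2]
      have hfe : (Finset.univ.filter
            fun p : CubeBasis G n => p.1.card = i ∧ cubeDeg G n p = j)
          = (Finset.univ.filter
            fun p : CubeBasis G n => (p.1.card, cubeDeg G n p) = (i, j)) :=
        Finset.filter_congr fun p _ => by simp [Prod.ext_iff]
      rw [Finset.sum_congr rfl hconst, Finset.sum_const, hrank, hfe, nsmul_eq_mul,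
        mul_comm ((-1 : ℤ) ^ i), map_mul, map_natCast]
      ring
    · intro i hi
      simp only [Function.mem_support] at hi
      by_contra hmem
      simp only [Finset.coe_range, Set.mem_Iio, not_lt, Nat.lt_succ_iff] at hmem
      apply hi
      have hz : ∀ j, chainRank G n i j = 0 := by
        intro j
        rw [hrank, Finset.card_eq_zero, Finset.filter_eq_empty_iff]
        rintro p - ⟨hc, -⟩
        have := hcard p
        omega
      have hzz : ∀ j : ℕ, C ((-1 : ℤ) ^ i * (chainRank G n i j : ℤ)) * X ^ j = 0 := by
        intro j; simp [hz]
      rw [finsum_congr hzz, finsum_zero]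
  have hPGn : PGn G n
      = ∑ p : CubeBasis G n, C ((-1 : ℤ) ^ p.1.card) * X ^ cubeDeg G n p := by
    have hsigma : (∑ p : CubeBasis G n, C ((-1 : ℤ) ^ p.1.card) * X ^ cubeDeg G n p)
        = ∑ s : Finset G.E, ∑ b : ((G.spanning ↑s).ConnectedComponent → Fin (n + 1)),
            C ((-1 : ℤ) ^ s.card) * X ^ cubeDeg G n ⟨s, b⟩ := by
      have h := Finset.sum_sigma (Finset.univ : Finset (Finset G.E))
        (fun _ => Finset.univ)
        (fun p : (Σ s : Finset G.E, ((G.spanning ↑s).ConnectedComponent → Fin (n + 1))) =>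
          C ((-1 : ℤ) ^ p.1.card) * X ^ cubeDeg G n p)
      rw [Finset.univ_sigma_univ] at h
      exact h
    rw [hsigma, PGn]
    apply Finset.sum_congr rfl
    intro s _hs
    have hk : G.kcomp s = Fintype.card (G.spanning ↑s).ConnectedComponent := by
      rw [kcomp, Nat.card_eq_fintype_card]
    rw [hk, ← Finset.card_univ,
      show ((∑ a ∈ Finset.range (n + 1), (X : Polynomial ℤ) ^ a)
            ^ (Finset.univ : Finset (G.spanning ↑s).ConnectedComponent).card)
          = ∏ _c : (G.spanning ↑s).ConnectedComponent,
              (∑ a ∈ Finset.range (n + 1), (X : Polynomial ℤ) ^ a)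
        from (Finset.prod_const _).symm,
      Finset.prod_univ_sum]
    have hre : (∑ g ∈ Fintype.piFinset
          (fun _ : (G.spanning ↑s).ConnectedComponent => Finset.range (n + 1)),
          ∏ c, (X : Polynomial ℤ) ^ g c)
        = ∑ b : ((G.spanning ↑s).ConnectedComponent → Fin (n + 1)),
            X ^ (∑ c, (n - (b c : ℕ))) := by
      apply Finset.sum_nbij'
        (i := fun g => (fun c =>
          (⟨n - g c, Nat.lt_succ_of_le (Nat.sub_le _ _)⟩ : Fin (n + 1))))
        (j := fun b => (fun c => n - (b c : ℕ)))
      · intro g _; exact Finset.mem_univ _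
      · intro b _
        rw [Fintype.mem_piFinset]
        intro c
        exact Finset.mem_range.mpr (Nat.lt_succ_of_le (Nat.sub_le _ _))
      · intro g hg
        rw [Fintype.mem_piFinset] at hg
        funext c
        have hb := Finset.mem_range.mp (hg c)
        simp only [Fin.val_mk]
        omega
      · intro b _
        funext c
        have hb := (b c).isLt
        ext
        simp only [Fin.val_mk]
        omega
      · intro g hg
        rw [Fintype.mem_piFinset] at hg
        rw [Finset.prod_pow_eq_pow_sum]
        congr 1
        refine Finset.sum_congr rfl fun c _ => ?_
        have hb := Finset.mem_range.mp (hg c)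
        simp only [Fin.val_mk]
        omega
    rw [hre, Finset.mul_sum]
    apply Finset.sum_congr rfl
    intro b _
    show _ = C ((-1 : ℤ) ^ s.card) * X ^ (n * s.card + ∑ c, (n - (b c : ℕ)))
    rw [pow_add, mul_assoc]
  rw [hEuler, hPGn]
end

section
/- Proposition 5: The map d of the enhanced-state complex sends C^{i,j}(G) into C^{i+1,j}(G) and satisfies d ∘ d = 0. -/
namespace MultiGraph

/-- The map between component sets induced by enlarging the state. -/
def push (G : MultiGraph) {s s' : Finset G.E} (h : s ⊆ s') :
    (G.spanning ↑s).ConnectedComponent → (G.spanning ↑s').ConnectedComponent :=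
  SimpleGraph.ConnectedComponent.map (SimpleGraph.Hom.ofLE (by
    rintro a b ⟨hne, e, he, hh⟩
    exact ⟨hne, e, h he, hh⟩))

/-- An enhanced state: a state `s ⊆ E(G)` together with a labelling of the connected
components of `[G : s]` by nonnegative integers. -/
def EState (G : MultiGraph) :=
  Σ s : Finset G.E, ((G.spanning ↑s).ConnectedComponent → ℕ)

/-- `i(S) = |s|`. -/
def iDeg (G : MultiGraph) (S : EState G) : ℕ := S.1.card

/-- `j(S) = |s| + k(s) − |l|` (an integer). -/
noncomputable def jDeg (G : MultiGraph) (S : EState G) : ℤ :=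
  letI := Fintype.ofFinite (G.spanning ↑S.1).ConnectedComponent
  (S.1.card : ℤ) + (G.kcomp S.1 : ℤ) - ∑ c, (S.2 c : ℤ)

/-- The enhanced state `S_e = (s ∪ {e}, l_e)`: if `e` joins two distinct components the
labels of the merged components add up; if both endpoints of `e` lie in a single
component its label increases by `1`; all other labels are unchanged. -/
noncomputable def addEdge (G : MultiGraph) (S : EState G) (e : G.E) : EState G := by
  classical
  exact ⟨insert e S.1, fun c' =>
    letI := Fintype.ofFinite (G.spanning ↑S.1).ConnectedComponent
    (∑ c ∈ Finset.univ.filter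
        (fun c => push G (Finset.subset_insert e S.1) c = c'), S.2 c) +
    (if (∀ u v : G.V, G.ends e = s(u, v) → (G.spanning ↑S.1).Reachable u v)
        ∧ (∃ u ∈ G.ends e, (G.spanning ↑(insert e S.1)).connectedComponentMk u = c')
      then 1 else 0)⟩

/-- The differential of the enhanced-state complex (w.r.t. an ordering `ord` of the
edges): `d(S) = Σ_{e ∈ E(G) ∖ s} (−1)^{n_e} S_e`. -/
noncomputable def eDiff (G : MultiGraph) (ord : G.E ↪ ℕ) :
    (EState G →₀ ℤ) →ₗ[ℤ] (EState G →₀ ℤ) := by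
  classical
  exact Finsupp.lift _ ℤ _ (fun S =>
    letI : Fintype G.E := Fintype.ofFinite G.E
    ∑ e ∈ Finset.univ.filter (fun e => e ∉ S.1),
      ((-1 : ℤ) ^ (S.1.filter (fun f => ord f < ord e)).card) •
        Finsupp.single (addEdge G S e) (1 : ℤ))

/-- The span of the enhanced states with `i(S) = i` and `j(S) = j`, i.e.
`C^{i,j}(G)` inside the total enhanced-state module. -/
noncomputable def CIJ (G : MultiGraph) (i : ℕ) (j : ℤ) :
    Submodule ℤ (EState G →₀ ℤ) :=
  Submodule.span ℤ {x | ∃ S : EState G, iDeg G S = i ∧ jDeg G S = j ∧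
    x = Finsupp.single S (1 : ℤ)}

end MultiGraph


namespace MultiGraph

open SimpleGraph Finset

variable {G : MultiGraph}

lemma spanning_mono {s t : Set G.E} (h : s ⊆ t) : G.spanning s ≤ G.spanning t := by
  rintro a b ⟨hne, e, he, hh⟩; exact ⟨hne, e, h he, hh⟩

lemma reach_mono {s t : Finset G.E} (h : s ⊆ t) {u v : G.V}
    (hr : (G.spanning ↑s).Reachable u v) : (G.spanning ↑t).Reachable u v :=
  hr.mono (spanning_mono (by exact_mod_cast h))

lemma spanning_insert [DecidableEq G.E] (e : G.E) (s : Finset G.E) :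
    G.spanning ↑(insert e s) = G.spanning ↑s ⊔ SimpleGraph.fromEdgeSet {G.ends e} := by
  ext a b
  simp only [spanning, sup_adj, fromEdgeSet_adj, Set.mem_singleton_iff, coe_insert,
    Set.mem_insert_iff, Finset.mem_coe]
  constructor
  · rintro ⟨hne, e', (rfl | he'), hh⟩
    · exact Or.inr ⟨hh.symm ▸ rfl, hne⟩
    · exact Or.inl ⟨hne, e', he', hh⟩
  · rintro (⟨hne, e', he', hh⟩ | ⟨hh, hne⟩)
    · exact ⟨hne, e', Or.inr he', hh⟩
    · exact ⟨hne, e, Or.inl rfl, hh.symm⟩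

lemma reachable_sup_edge {V : Type*} {H : SimpleGraph V} {a b u v : V} :
    (H ⊔ SimpleGraph.fromEdgeSet {s(a, b)}).Reachable u v ↔
      H.Reachable u v ∨ (H.Reachable u a ∧ H.Reachable b v) ∨
        (H.Reachable u b ∧ H.Reachable a v) := by
  constructor
  · rintro ⟨w⟩
    induction w with
    | nil => exact Or.inl (Reachable.refl _)
    | @cons x y z h p ih =>
      rcases h with h | h
      · rcases ih with h1 | ⟨h1, h2⟩ | ⟨h1, h2⟩
        · exact Or.inl (h.reachable.trans h1)
        · exact Or.inr (Or.inl ⟨h.reachable.trans h1, h2⟩)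
        · exact Or.inr (Or.inr ⟨h.reachable.trans h1, h2⟩)
      · rcases h with ⟨h, hne⟩
        rw [Sym2.toRel_prop, Set.mem_singleton_iff, Sym2.eq_iff] at h
        rcases h with ⟨rfl, rfl⟩ | ⟨rfl, rfl⟩
        · rcases ih with h1 | ⟨h1, h2⟩ | ⟨h1, h2⟩
          · exact Or.inr (Or.inl ⟨Reachable.refl _, h1⟩)
          · exact Or.inr (Or.inl ⟨Reachable.refl _, h2⟩)
          · exact Or.inl h2
        · rcases ih with h1 | ⟨h1, h2⟩ | ⟨h1, h2⟩
          · exact Or.inr (Or.inr ⟨Reachable.refl _, h1⟩)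
          · exact Or.inl h2
          · exact Or.inr (Or.inr ⟨Reachable.refl _, h2⟩)
  · have hmono : H ≤ H ⊔ SimpleGraph.fromEdgeSet {s(a, b)} := le_sup_left
    have hab : (H ⊔ SimpleGraph.fromEdgeSet {s(a, b)}).Reachable a b := by
      rcases eq_or_ne a b with rfl | hne
      · exact Reachable.refl _
      · exact SimpleGraph.Adj.reachable (by simp [SimpleGraph.fromEdgeSet_adj, hne])
    rintro (h | ⟨h1, h2⟩ | ⟨h1, h2⟩)
    · exact h.mono hmono
    · exact ((h1.mono hmono).trans hab).trans (h2.mono hmono)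
    · exact ((h1.mono hmono).trans hab.symm).trans (h2.mono hmono)

lemma reach_insert_iff [DecidableEq G.E] {e : G.E} {s : Finset G.E} {a b : G.V}
    (hab : G.ends e = s(a, b)) {u v : G.V} :
    (G.spanning ↑(insert e s)).Reachable u v ↔
      (G.spanning ↑s).Reachable u v ∨
        ((G.spanning ↑s).Reachable u a ∧ (G.spanning ↑s).Reachable b v) ∨
        ((G.spanning ↑s).Reachable u b ∧ (G.spanning ↑s).Reachable a v) := by
  rw [spanning_insert, hab, reachable_sup_edge]


/-- The condition appearing in `addEdge`. -/
def conn (G : MultiGraph) (s : Finset G.E) (e : G.E) : Prop :=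
  ∀ u v : G.V, G.ends e = s(u, v) → (G.spanning ↑s).Reachable u v

lemma conn_iff {s : Finset G.E} {e : G.E} {a b : G.V} (hab : G.ends e = s(a, b)) :
    conn G s e ↔ (G.spanning ↑s).Reachable a b := by
  constructor
  · exact fun h => h a b hab
  · intro h u v huv
    rw [hab, Sym2.eq_iff] at huv
    rcases huv with ⟨rfl, rfl⟩ | ⟨rfl, rfl⟩
    · exact h
    · exact h.symm

lemma conn_mono {s t : Finset G.E} (hst : s ⊆ t) {e : G.E} (h : conn G s e) : conn G t e :=
  fun u v huv => reach_mono hst (h u v huv)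

/-- Adding an edge between already-connected vertices changes no reachability. -/
lemma ends_rep (e : G.E) : ∃ a b : G.V, G.ends e = s(a, b) :=
  Sym2.inductionOn (G.ends e) fun x y => ⟨x, y, rfl⟩

/-- Adding an edge between already-connected vertices changes no reachability. -/
lemma reach_insert_of_conn [DecidableEq G.E] {e : G.E} {s : Finset G.E}
    (h : conn G s e) {u v : G.V} :
    (G.spanning ↑(insert e s)).Reachable u v ↔ (G.spanning ↑s).Reachable u v := by
  obtain ⟨a, b, hab⟩ := ends_rep (G := G) e
  have hr : (G.spanning ↑s).Reachable a b := (conn_iff hab).1 h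
  rw [reach_insert_iff hab]
  constructor
  · rintro (h1 | ⟨h1, h2⟩ | ⟨h1, h2⟩)
    · exact h1
    · exact (h1.trans hr).trans h2
    · exact (h1.trans hr.symm).trans h2
  · exact Or.inl

lemma push_mk {s t : Finset G.E} (h : s ⊆ t) (x : G.V) :
    push G h ((G.spanning ↑s).connectedComponentMk x)
      = (G.spanning ↑t).connectedComponentMk x := rfl

lemma push_push {s t u : Finset G.E} (h1 : s ⊆ t) (h2 : t ⊆ u)
    (c : (G.spanning ↑s).ConnectedComponent) :
    push G h2 (push G h1 c) = push G (h1.trans h2) c := by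
  refine c.ind fun x => rfl



section Fibers
open scoped Classical
variable [DecidableEq G.E] {e : G.E} {s : Finset G.E}

lemma reach_insert_edge {a b : G.V} (hab : G.ends e = s(a, b)) :
    (G.spanning ↑(insert e s)).Reachable a b :=
  (reach_insert_iff hab).2 (Or.inr (Or.inl ⟨Reachable.refl _, Reachable.refl _⟩))

lemma push_eq_mk_iff_conn (h : conn G s e) (x : G.V)
    (c : (G.spanning ↑s).ConnectedComponent) :
    push G (Finset.subset_insert e s) c = (G.spanning ↑(insert e s)).connectedComponentMk x
      ↔ c = (G.spanning ↑s).connectedComponentMk x := by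
  refine c.ind fun y => ?_
  rw [push_mk, ConnectedComponent.eq, ConnectedComponent.eq]
  exact reach_insert_of_conn h

lemma push_eq_mk_iff_near {a b : G.V} (hab : G.ends e = s(a, b)) (hn : ¬ conn G s e)
    {x : G.V} (hx : (G.spanning ↑(insert e s)).Reachable x a)
    (c : (G.spanning ↑s).ConnectedComponent) :
    push G (Finset.subset_insert e s) c = (G.spanning ↑(insert e s)).connectedComponentMk x
      ↔ c = (G.spanning ↑s).connectedComponentMk a
        ∨ c = (G.spanning ↑s).connectedComponentMk b := by
  have hnab : ¬ (G.spanning ↑s).Reachable a b := fun h => hn ((conn_iff hab).2 h)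
  refine c.ind fun y => ?_
  rw [push_mk, ConnectedComponent.eq, ConnectedComponent.eq, ConnectedComponent.eq]
  constructor
  · intro h
    have h' : (G.spanning ↑(insert e s)).Reachable y a := h.trans hx
    rcases (reach_insert_iff hab).1 h' with h1 | ⟨h1, h2⟩ | ⟨h1, h2⟩
    · exact Or.inl h1
    · exact absurd h2.symm hnab
    · exact Or.inr h1
  · rintro (h | h)
    · exact (reach_mono (Finset.subset_insert e s) h).trans hx.symm
    · exact ((reach_mono (Finset.subset_insert e s) h).trans
        (reach_insert_edge hab).symm).trans hx.symm

lemma push_eq_mk_iff_far {a b : G.V} (hab : G.ends e = s(a, b))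
    {x : G.V} (hx : ¬ (G.spanning ↑(insert e s)).Reachable x a)
    (c : (G.spanning ↑s).ConnectedComponent) :
    push G (Finset.subset_insert e s) c = (G.spanning ↑(insert e s)).connectedComponentMk x
      ↔ c = (G.spanning ↑s).connectedComponentMk x := by
  have hxb : ¬ (G.spanning ↑(insert e s)).Reachable x b :=
    fun h => hx (h.trans (reach_insert_edge hab).symm)
  refine c.ind fun y => ?_
  rw [push_mk, ConnectedComponent.eq, ConnectedComponent.eq]
  constructor
  · intro h
    rcases (reach_insert_iff hab).1 h with h1 | ⟨h1, h2⟩ | ⟨h1, h2⟩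
    · exact h1
    · exact absurd ((reach_mono (Finset.subset_insert e s) h2).symm) hxb
    · exact absurd ((reach_mono (Finset.subset_insert e s) h2).symm) hx
  · exact fun h => reach_mono (Finset.subset_insert e s) h

lemma kcomp_insert {a b : G.V} (hab : G.ends e = s(a, b)) :
    kcomp G s = kcomp G (insert e s) + (if conn G s e then 0 else 1) := by
  classical
  letI : Fintype (G.spanning ↑s).ConnectedComponent := Fintype.ofFinite _
  letI : Fintype (G.spanning ↑(insert e s)).ConnectedComponent := Fintype.ofFinite _
  rw [kcomp, kcomp, Nat.card_eq_fintype_card, Nat.card_eq_fintype_card,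
    ← Finset.card_univ,
    Finset.card_eq_sum_card_fiberwise
      (f := push G (Finset.subset_insert e s)) (t := Finset.univ) (fun c _ => mem_univ _)]
  have key : ∀ c' : (G.spanning ↑(insert e s)).ConnectedComponent,
      (Finset.univ.filter (fun c => push G (Finset.subset_insert e s) c = c')).card
        = 1 + (if ¬ conn G s e ∧
            c' = (G.spanning ↑(insert e s)).connectedComponentMk a then 1 else 0) := by
    intro c'
    refine c'.ind fun x => ?_
    by_cases hc : conn G s e
    · have h1 : (Finset.univ.filter (fun c => push G (Finset.subset_insert e s) c
          = (G.spanning ↑(insert e s)).connectedComponentMk x))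
          = {(G.spanning ↑s).connectedComponentMk x} := by
        ext c
        simp only [mem_filter, mem_univ, true_and, mem_singleton]
        exact push_eq_mk_iff_conn hc x c
      rw [h1, Finset.card_singleton, if_neg (by tauto)]
    · by_cases hx : (G.spanning ↑(insert e s)).Reachable x a
      · have h1 : (Finset.univ.filter (fun c => push G (Finset.subset_insert e s) c
            = (G.spanning ↑(insert e s)).connectedComponentMk x))
            = {(G.spanning ↑s).connectedComponentMk a,
               (G.spanning ↑s).connectedComponentMk b} := by
          ext c
          simp only [mem_filter, mem_univ, true_and, mem_insert, mem_singleton]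
          exact push_eq_mk_iff_near hab hc hx c
        have hne : (G.spanning ↑s).connectedComponentMk a
            ≠ (G.spanning ↑s).connectedComponentMk b := by
          rw [ne_eq, ConnectedComponent.eq]
          exact fun h => hc ((conn_iff hab).2 h)
        rw [h1, Finset.card_pair hne,
          if_pos ⟨hc, ConnectedComponent.sound hx⟩]
      · have h1 : (Finset.univ.filter (fun c => push G (Finset.subset_insert e s) c
            = (G.spanning ↑(insert e s)).connectedComponentMk x))
            = {(G.spanning ↑s).connectedComponentMk x} := by
          ext c
          simp only [mem_filter, mem_univ, true_and, mem_singleton]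
          exact push_eq_mk_iff_far hab hx c
        rw [h1, Finset.card_singleton,
          if_neg (fun h => hx (ConnectedComponent.exact h.2))]
  rw [Finset.sum_congr rfl (fun c' _ => key c'), Finset.sum_add_distrib,
    Finset.sum_const, smul_eq_mul, mul_one, Finset.card_univ]
  congr 1
  by_cases hc : conn G s e
  · simp [hc]
  · simp only [hc, not_false_iff, true_and, if_false]
    rw [Finset.sum_ite_eq' Finset.univ
      ((G.spanning ↑(insert e s)).connectedComponentMk a) (fun _ => 1),
      if_pos (mem_univ _)]

end Fibers

section Grading
open scoped Classical

lemma jDeg_eq (S : EState G) :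
    jDeg G S = (S.1.card : ℤ) + (G.kcomp S.1 : ℤ)
      - ∑ c ∈ (@Finset.univ _ (Fintype.ofFinite (G.spanning ↑S.1).ConnectedComponent)),
          (S.2 c : ℤ) := rfl

lemma sum_label (S : EState G) (e : G.E) :
    (∑ c' ∈ (@Finset.univ _
        (Fintype.ofFinite (G.spanning ↑(insert e S.1)).ConnectedComponent)),
      ((addEdge G S e).2 c' : ℤ))
      = (∑ c ∈ (@Finset.univ _
          (Fintype.ofFinite (G.spanning ↑S.1).ConnectedComponent)), (S.2 c : ℤ))
        + (if conn G S.1 e then 1 else 0) := by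
  letI := Fintype.ofFinite (G.spanning ↑(insert e S.1)).ConnectedComponent
  letI := Fintype.ofFinite (G.spanning ↑S.1).ConnectedComponent
  have h1 : ∀ c' : (G.spanning ↑(insert e S.1)).ConnectedComponent,
      ((addEdge G S e).2 c' : ℤ) =
      (∑ c ∈ Finset.univ.filter
        (fun c => push G (Finset.subset_insert e S.1) c = c'), (S.2 c : ℤ)) +
      (if conn G S.1 e
          ∧ (∃ u ∈ G.ends e, (G.spanning ↑(insert e S.1)).connectedComponentMk u = c')
        then 1 else 0) := by
    intro c'
    show (((∑ c ∈ Finset.univ.filter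
        (fun c => push G (Finset.subset_insert e S.1) c = c'), S.2 c) +
      (if conn G S.1 e
          ∧ (∃ u ∈ G.ends e, (G.spanning ↑(insert e S.1)).connectedComponentMk u = c')
        then 1 else 0) : ℕ) : ℤ) = _
    rw [Nat.cast_add, Nat.cast_sum, apply_ite (fun n : ℕ => (n : ℤ))]
    norm_num
  rw [Finset.sum_congr rfl (fun c' _ => h1 c'), Finset.sum_add_distrib]
  congr 1
  · exact Finset.sum_fiberwise_of_maps_to (fun c _ => Finset.mem_univ _)
      (fun c => (S.2 c : ℤ))
  by_cases hc : conn G S.1 e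
  · simp only [hc, true_and, if_true]
    obtain ⟨a, b, hab⟩ := ends_rep (G := G) e
    have hmem : ∀ c' : (G.spanning ↑(insert e S.1)).ConnectedComponent,
        (∃ u ∈ G.ends e, (G.spanning ↑(insert e S.1)).connectedComponentMk u = c')
          ↔ (G.spanning ↑(insert e S.1)).connectedComponentMk a = c' := by
      intro c'
      constructor
      · rintro ⟨u, hu, hmk⟩
        rw [hab, Sym2.mem_iff] at hu
        rcases hu with rfl | rfl
        · exact hmk
        · exact (ConnectedComponent.sound (reach_insert_edge hab)).trans hmk
      · intro h
        exact ⟨a, by rw [hab]; exact Sym2.mem_mk_left a b, h⟩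
    rw [Finset.sum_congr rfl (fun c' _ => by rw [if_congr (hmem c') rfl rfl])]
    rw [Finset.sum_ite_eq Finset.univ
      ((G.spanning ↑(insert e S.1)).connectedComponentMk a) (fun _ => (1 : ℤ)),
      if_pos (Finset.mem_univ _)]
  · simp [hc]

lemma iDeg_addEdge (S : EState G) (e : G.E) (he : e ∉ S.1) :
    iDeg G (addEdge G S e) = iDeg G S + 1 := by
  show (insert e S.1).card = S.1.card + 1
  exact Finset.card_insert_of_notMem he

lemma jDeg_addEdge (S : EState G) (e : G.E) (he : e ∉ S.1) :
    jDeg G (addEdge G S e) = jDeg G S := by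
  obtain ⟨a, b, hab⟩ := ends_rep (G := G) e
  have hk := kcomp_insert (s := S.1) hab
  have hl := sum_label S e
  rw [jDeg_eq, jDeg_eq]
  show ((insert e S.1).card : ℤ) + (G.kcomp (insert e S.1) : ℤ)
      - (∑ c' ∈ (@Finset.univ _
          (Fintype.ofFinite (G.spanning ↑(insert e S.1)).ConnectedComponent)),
          ((addEdge G S e).2 c' : ℤ)) = _
  rw [Finset.card_insert_of_notMem he, hl, hk]
  by_cases hc : conn G S.1 e <;> simp only [hc, if_true, if_false] <;> push_cast <;> ring

end Grading

section Comm
open scoped Classical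

lemma estate_ext {S T : EState G} (h : S.1 = T.1)
    (hl : ∀ x : G.V, S.2 ((G.spanning ↑S.1).connectedComponentMk x)
        = T.2 ((G.spanning ↑T.1).connectedComponentMk x)) : S = T := by
  obtain ⟨s, l⟩ := S; obtain ⟨t, m⟩ := T
  dsimp only at h
  subst h
  exact congrArg (Sigma.mk s) (funext fun c => c.ind hl)

lemma double_label (S : EState G) (e f : G.E) (x : G.V) :
    (addEdge G (addEdge G S e) f).2
        ((G.spanning ↑(insert f (insert e S.1))).connectedComponentMk x)
      = (∑ c ∈ (@Finset.univ _
            (Fintype.ofFinite (G.spanning ↑S.1).ConnectedComponent)).filter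
            (fun c => ∃ y, (G.spanning ↑S.1).connectedComponentMk y = c
               ∧ (G.spanning ↑(insert f (insert e S.1))).Reachable y x), S.2 c)
        + ((if conn G S.1 e ∧ (∃ u ∈ G.ends e,
              (G.spanning ↑(insert f (insert e S.1))).Reachable u x) then 1 else 0)
        + (if conn G (insert e S.1) f ∧ (∃ u ∈ G.ends f,
              (G.spanning ↑(insert f (insert e S.1))).Reachable u x) then 1 else 0)) := by
  letI := Fintype.ofFinite (G.spanning ↑S.1).ConnectedComponent
  letI := Fintype.ofFinite (G.spanning ↑(insert e S.1)).ConnectedComponent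
  letI := Fintype.ofFinite (G.spanning ↑(insert f (insert e S.1))).ConnectedComponent
  -- step 1 : unfold the outer addEdge
  have step1 : (addEdge G (addEdge G S e) f).2
        ((G.spanning ↑(insert f (insert e S.1))).connectedComponentMk x)
      = (∑ c' ∈ Finset.univ.filter
          (fun c' => push G (Finset.subset_insert f (insert e S.1)) c'
            = (G.spanning ↑(insert f (insert e S.1))).connectedComponentMk x),
          (addEdge G S e).2 c')
        + (if conn G (insert e S.1) f ∧ (∃ u ∈ G.ends f,
            (G.spanning ↑(insert f (insert e S.1))).connectedComponentMk u
              = (G.spanning ↑(insert f (insert e S.1))).connectedComponentMk x)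
          then 1 else 0) := rfl
  rw [step1]
  -- step 2 : unfold the inner addEdge under the sum
  have step2 : ∀ c' : (G.spanning ↑(insert e S.1)).ConnectedComponent,
      (addEdge G S e).2 c'
      = (∑ c ∈ Finset.univ.filter
          (fun c => push G (Finset.subset_insert e S.1) c = c'), S.2 c)
        + (if conn G S.1 e ∧ (∃ u ∈ G.ends e,
            (G.spanning ↑(insert e S.1)).connectedComponentMk u = c') then 1 else 0) :=
    fun _ => rfl
  rw [Finset.sum_congr rfl (fun c' _ => step2 c'), Finset.sum_add_distrib, add_assoc]
  congr 1
  · -- the composed fiber sum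
    refine Eq.trans (Finset.sum_fiberwise_eq_sum_filter _ _
      (push G (Finset.subset_insert e S.1)) S.2) ?_
    refine Finset.sum_congr (Finset.filter_congr fun c _ => ?_) (fun _ _ => rfl)
    refine c.ind (fun y => ?_)
    simp only [Finset.mem_filter, Finset.mem_univ, true_and, push_mk,
      ConnectedComponent.eq]
    constructor
    · exact fun h => ⟨y, Reachable.refl _, h⟩
    · rintro ⟨y', hy', h⟩
      exact (reach_mono (Finset.subset_insert f (insert e S.1))
        (reach_mono (Finset.subset_insert e S.1) hy')).symm.trans h
  congr 1
  · -- pushed-up e indicator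
    by_cases hc : conn G S.1 e
    · obtain ⟨a, b, hab⟩ := ends_rep (G := G) e
      have hmem : ∀ c' : (G.spanning ↑(insert e S.1)).ConnectedComponent,
          (conn G S.1 e ∧ ∃ u ∈ G.ends e,
            (G.spanning ↑(insert e S.1)).connectedComponentMk u = c')
            ↔ (G.spanning ↑(insert e S.1)).connectedComponentMk a = c' := by
        intro c'
        constructor
        · rintro ⟨-, u, hu, hmk⟩
          rw [hab, Sym2.mem_iff] at hu
          rcases hu with rfl | rfl
          · exact hmk
          · exact (ConnectedComponent.sound (reach_insert_edge hab)).trans hmk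
        · intro h
          exact ⟨hc, a, by rw [hab]; exact Sym2.mem_mk_left a b, h⟩
      rw [Finset.sum_congr rfl (fun c' _ => by rw [if_congr (hmem c') rfl rfl])]
      rw [Finset.sum_ite_eq _
        ((G.spanning ↑(insert e S.1)).connectedComponentMk a) (fun _ => 1)]
      refine if_congr ?_ rfl rfl
      simp only [Finset.mem_filter, Finset.mem_univ, true_and, push_mk,
        ConnectedComponent.eq]
      constructor
      · intro h
        exact ⟨hc, a, by rw [hab]; exact Sym2.mem_mk_left a b, h⟩
      · rintro ⟨-, u, hu, hr⟩
        rw [hab, Sym2.mem_iff] at hu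
        rcases hu with rfl | rfl
        · exact hr
        · exact (reach_mono (Finset.subset_insert f (insert e S.1))
            (reach_insert_edge hab)).trans hr
    · simp [hc]
  · -- f indicator
    refine if_congr (and_congr_right fun _ => ?_) rfl rfl
    simp only [ConnectedComponent.eq]


lemma conn_insert_of_conn [DecidableEq G.E] {s : Finset G.E} {e f : G.E}
    (h : conn G s e) : conn G (insert e s) f ↔ conn G s f := by
  constructor
  · intro hf u v huv
    exact (reach_insert_of_conn h).1 (hf u v huv)
  · exact conn_mono (Finset.subset_insert e s)

lemma conn_exchange [DecidableEq G.E] {s : Finset G.E} {e f : G.E}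
    (hcf : ¬ conn G s f) (h : conn G (insert e s) f) : conn G (insert f s) e := by
  obtain ⟨a, b, hab⟩ := ends_rep (G := G) e
  obtain ⟨c, d, hcd⟩ := ends_rep (G := G) f
  have hr : (G.spanning ↑(insert e s)).Reachable c d := (conn_iff hcd).1 h
  rw [conn_iff hab]
  rcases (reach_insert_iff hab).1 hr with h1 | ⟨h1, h2⟩ | ⟨h1, h2⟩
  · exact absurd ((conn_iff hcd).2 h1) hcf
  · exact (reach_insert_iff hcd).2 (Or.inr (Or.inl ⟨h1.symm, h2.symm⟩))
  · exact (reach_insert_iff hcd).2 (Or.inr (Or.inr ⟨h2, h1⟩))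

lemma ends_linked [DecidableEq G.E] {s : Finset G.E} {e f : G.E} {a b c d : G.V}
    (hcf : ¬ conn G s f) (h : conn G (insert e s) f)
    (hab : G.ends e = s(a, b)) (hcd : G.ends f = s(c, d)) :
    (G.spanning ↑(insert f (insert e s))).Reachable a c := by
  have hr : (G.spanning ↑(insert e s)).Reachable c d := (conn_iff hcd).1 h
  have hmono : ∀ {u v : G.V}, (G.spanning ↑s).Reachable u v →
      (G.spanning ↑(insert f (insert e s))).Reachable u v :=
    fun h => reach_mono (Finset.subset_insert f (insert e s))
      (reach_mono (Finset.subset_insert e s) h)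
  have heH : (G.spanning ↑(insert f (insert e s))).Reachable a b :=
    reach_mono (Finset.subset_insert f (insert e s)) (reach_insert_edge hab)
  rcases (reach_insert_iff hab).1 hr with h1 | ⟨h1, h2⟩ | ⟨h1, h2⟩
  · exact absurd ((conn_iff hcd).2 h1) hcf
  · exact (hmono h1).symm
  · exact heH.trans (hmono h1).symm

lemma exists_end_iff {H : SimpleGraph G.V} {g : G.E} {p q x : G.V}
    (hpq : G.ends g = s(p, q)) (hr : H.Reachable p q) :
    (∃ u ∈ G.ends g, H.Reachable u x) ↔ H.Reachable p x := by
  rw [hpq]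
  constructor
  · rintro ⟨u, hu, h⟩
    rw [Sym2.mem_iff] at hu
    rcases hu with rfl | rfl
    · exact h
    · exact hr.trans h
  · exact fun h => ⟨p, Sym2.mem_mk_left p q, h⟩

lemma indicator_swap [DecidableEq G.E] (s : Finset G.E) (e f : G.E) (x : G.V) :
    ((if conn G s e ∧ (∃ u ∈ G.ends e,
          (G.spanning ↑(insert f (insert e s))).Reachable u x) then 1 else 0)
      + (if conn G (insert e s) f ∧ (∃ u ∈ G.ends f,
          (G.spanning ↑(insert f (insert e s))).Reachable u x) then 1 else 0) : ℕ)
    = (if conn G s f ∧ (∃ u ∈ G.ends f,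
          (G.spanning ↑(insert f (insert e s))).Reachable u x) then 1 else 0)
      + (if conn G (insert f s) e ∧ (∃ u ∈ G.ends e,
          (G.spanning ↑(insert f (insert e s))).Reachable u x) then 1 else 0) := by
  obtain ⟨a, b, hab⟩ := ends_rep (G := G) e
  obtain ⟨c, d, hcd⟩ := ends_rep (G := G) f
  have heH : (G.spanning ↑(insert f (insert e s))).Reachable a b :=
    reach_mono (Finset.subset_insert f (insert e s)) (reach_insert_edge hab)
  have hfH : (G.spanning ↑(insert f (insert e s))).Reachable c d :=
    reach_insert_edge (s := insert e s) hcd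
  rw [if_congr (and_congr_right fun _ => exists_end_iff hab heH) rfl rfl,
    if_congr (and_congr_right fun _ => exists_end_iff hab heH) rfl rfl,
    if_congr (and_congr_right fun _ => exists_end_iff hcd hfH) rfl rfl,
    if_congr (and_congr_right fun _ => exists_end_iff hcd hfH) rfl rfl]
  by_cases hce : conn G s e <;> by_cases hcf : conn G s f
  · have h1 : conn G (insert e s) f := conn_mono (Finset.subset_insert e s) hcf
    have h2 : conn G (insert f s) e := conn_mono (Finset.subset_insert f s) hce
    simp only [hce, hcf, h1, h2, true_and]
    exact add_comm _ _
  · have h1 : ¬ conn G (insert e s) f := fun h => hcf ((conn_insert_of_conn hce).1 h)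
    have h2 : conn G (insert f s) e := conn_mono (Finset.subset_insert f s) hce
    simp [hce, hcf, h1, h2]
  · have h1 : conn G (insert e s) f := conn_mono (Finset.subset_insert e s) hcf
    have h2 : ¬ conn G (insert f s) e := fun h => hce ((conn_insert_of_conn hcf).1 h)
    simp [hce, hcf, h1, h2]
  · by_cases h1 : conn G (insert e s) f
    · have h2 : conn G (insert f s) e := conn_exchange hcf h1
      have hac : (G.spanning ↑(insert f (insert e s))).Reachable a c :=
        ends_linked hcf h1 hab hcd
      simp only [hce, hcf, h1, h2, true_and, false_and, if_false, zero_add]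
      refine if_congr ?_ rfl rfl
      exact ⟨fun h => hac.trans h, fun h => hac.symm.trans h⟩
    · have h2 : ¬ conn G (insert f s) e := fun h2 => h1 (conn_exchange hce h2)
      simp only [hce, hcf, h1, h2, false_and, if_false]

lemma addEdge_comm (S : EState G) (e f : G.E) :
    addEdge G (addEdge G S e) f = addEdge G (addEdge G S f) e := by
  classical
  have hs : insert e (insert f S.1) = insert f (insert e S.1) := Finset.insert_comm e f S.1
  refine estate_ext ?_ ?_
  · show insert f (insert e S.1) = insert e (insert f S.1)
    exact hs.symm
  · intro x
    show (addEdge G (addEdge G S e) f).2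
        ((G.spanning ↑(insert f (insert e S.1))).connectedComponentMk x)
      = (addEdge G (addEdge G S f) e).2
        ((G.spanning ↑(insert e (insert f S.1))).connectedComponentMk x)
    rw [double_label S e f x, double_label S f e x]
    rw [show G.spanning ↑(insert e (insert f S.1)) = G.spanning ↑(insert f (insert e S.1))
      from by rw [hs]]
    congr 1
    exact indicator_swap S.1 e f x

end Comm

section Final
open scoped Classical

lemma eDiff_single (ord : G.E ↪ ℕ) (S : EState G) :
    eDiff G ord (Finsupp.single S 1) =
      ∑ e ∈ (@Finset.univ _ (Fintype.ofFinite G.E)).filter (fun e => e ∉ S.1),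
        ((-1 : ℤ) ^ (S.1.filter (fun f => ord f < ord e)).card) •
          Finsupp.single (addEdge G S e) (1 : ℤ) := by
  show Finsupp.lift _ ℤ _ _ (Finsupp.single S 1) = _
  rw [Finsupp.lift_apply, Finsupp.sum_single_index (by simp), one_smul]

lemma sign_flip (ord : G.E ↪ ℕ) {s : Finset G.E} {e f : G.E}
    (he : e ∉ s) (hf : f ∉ s) (hef : e ≠ f) :
    ((-1 : ℤ) ^ (s.filter (fun g => ord g < ord e)).card
        * (-1 : ℤ) ^ ((insert e s).filter (fun g => ord g < ord f)).card)
      + ((-1 : ℤ) ^ (s.filter (fun g => ord g < ord f)).card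
        * (-1 : ℤ) ^ ((insert f s).filter (fun g => ord g < ord e)).card) = 0 := by
  have hne : ord e ≠ ord f := fun h => hef (ord.injective h)
  rcases lt_or_gt_of_ne hne with h | h
  · rw [Finset.filter_insert, if_pos h,
      Finset.card_insert_of_notMem (fun hh => he (Finset.mem_of_mem_filter e hh)),
      Finset.filter_insert, if_neg (by omega)]
    rw [pow_succ]
    ring
  · rw [Finset.filter_insert, if_neg (by omega),
      Finset.filter_insert, if_pos h,
      Finset.card_insert_of_notMem (fun hh => hf (Finset.mem_of_mem_filter f hh))]
    rw [pow_succ]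
    ring


end Final


end MultiGraph


open MultiGraph in
/-- Proposition 5: `d` maps `C^{i,j}(G)` into `C^{i+1,j}(G)` and `d ∘ d = 0`. -/
theorem eDiff_graded_and_squared_zero (G : MultiGraph) (ord : G.E ↪ ℕ) :
    (∀ (i : ℕ) (j : ℤ),
      (MultiGraph.CIJ G i j).map (MultiGraph.eDiff G ord) ≤ MultiGraph.CIJ G (i + 1) j) ∧
    (MultiGraph.eDiff G ord).comp (MultiGraph.eDiff G ord) = 0 := by
  classical
  letI : Fintype G.E := Fintype.ofFinite G.E
  constructor
  · intro i j
    rw [CIJ, Submodule.map_span_le]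
    rintro m ⟨S, hi, hj, rfl⟩
    rw [eDiff_single]
    refine Submodule.sum_mem _ fun e he => Submodule.smul_mem _ _ (Submodule.subset_span ?_)
    rw [Finset.mem_filter] at he
    exact ⟨addEdge G S e, by rw [iDeg_addEdge S e he.2, hi],
      by rw [jDeg_addEdge S e he.2, hj], rfl⟩
  · refine Finsupp.lhom_ext fun S b => ?_
    have hb : (Finsupp.single S b : EState G →₀ ℤ) = b • Finsupp.single S 1 := by
      rw [Finsupp.smul_single, smul_eq_mul, mul_one]
    rw [LinearMap.comp_apply, hb, map_smul, map_smul, LinearMap.zero_apply]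
    suffices h : eDiff G ord (eDiff G ord (Finsupp.single S 1)) = 0 by
      rw [h, smul_zero]
    rw [eDiff_single, map_sum]
    have h1 : ∀ e, eDiff G ord
        (((-1 : ℤ) ^ (S.1.filter (fun f => ord f < ord e)).card) •
          Finsupp.single (addEdge G S e) (1 : ℤ))
        = ∑ f ∈ Finset.univ.filter (fun f => f ∉ insert e S.1),
            (((-1 : ℤ) ^ (S.1.filter (fun g => ord g < ord e)).card)
              * ((-1 : ℤ) ^ ((insert e S.1).filter (fun g => ord g < ord f)).card)) •
              Finsupp.single (addEdge G (addEdge G S e) f) (1 : ℤ) := by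
      intro e
      rw [map_smul, eDiff_single, Finset.smul_sum]
      refine Finset.sum_congr rfl fun f hf => ?_
      rw [smul_smul]
      rfl
    rw [Finset.sum_congr rfl (fun e _ => h1 e)]
    have h2 : ∀ e : G.E, Finset.univ.filter (fun f => f ∉ insert e S.1)
        = (Finset.univ.filter (fun f => f ∉ S.1)).filter (fun f => f ≠ e) := by
      intro e
      ext g
      simp only [Finset.mem_filter, Finset.mem_univ, true_and, Finset.mem_insert, not_or]
      tauto
    rw [Finset.sum_congr rfl (fun e _ => by rw [h2 e, Finset.sum_filter])]
    rw [← Finset.sum_product']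
    refine Finset.sum_involution (fun p _ => (p.2, p.1)) ?_ ?_ ?_ ?_
    · rintro ⟨e, f⟩ hp
      rw [Finset.mem_product, Finset.mem_filter, Finset.mem_filter] at hp
      dsimp only
      by_cases hef : f = e
      · subst hef
        simp
      · rw [if_pos hef, if_pos (Ne.symm hef), addEdge_comm S f e, ← add_smul,
          sign_flip ord hp.1.2 hp.2.2 (Ne.symm hef), zero_smul]
    · rintro ⟨e, f⟩ hp hne hcontra
      rw [Prod.mk.injEq] at hcontra
      obtain ⟨h1, h2⟩ := hcontra
      simp only at h1 h2
      subst h1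
      simp at hne
    · rintro ⟨e, f⟩ hp
      rw [Finset.mem_product] at hp ⊢
      exact ⟨hp.2, hp.1⟩
    · rintro ⟨e, f⟩ hp
      rfl
end
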